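/- arXiv:1407.6973 — 5 statements merged into one kernel-verified Lean document; each statement's English description precedes it below -/
import Mathlib

section
/- Let (p_n)_{n≥0} be polynomials in ℝ[λ] with deg p_n = n (with the convention p_k = 0 for k < 0), and let D_p be a linear operator on ℝ[λ] with D_p(p_n) = n·p_n for all n ≥ 0. Let m ≥ 1 and, for h = 1,…,m, let ε^h be a rational function of one variable (defined at every point where it is evaluated below), and let D_h be the linear operator on ℝ[λ] determined by D_h(p_n) = Σ_{j=1}^n (−1)^{j+1} ε^h(n) ε^h(n−1) ⋯ ε^h(n−j+1) p_{n−j} for n ≥ 0. Define rational functions ξ^h_{x,i} by ξ^h_{x,i} = ∏_{j=0}^{i−1} ε^h(x−j) for i ≥ 1, ξ^h_{x,0} = 1, and ξ^h_{x,i} = 1/ξ^h_{x−i,−i} for i ≤ −1. Let Y_1,…,Y_m be polynomials, and set Ω(x) = det( ξ^l_{x−j,m−j} Y_l(x−j) )_{l,j=1,…,m}; assume Ω(x) ≠ 0 for all integers 0 ≤ x ≤ M. For n ≥ 0 define q_n(λ) as the (m+1)×(m+1) determinant whose first row is (p_n(λ), −p_{n−1}(λ), …, (−1)^m p_{n−m}(λ))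 and whose (h+1)-th row is (ξ^h_{n,m} Y_h(n), ξ^h_{n−1,m−1} Y_h(n−1), …, Y_h(n−m)). Let S be a rational function such that the function S(x)Ω(x) and, for each h = 1,…,m, the function M_h(x) = Σ_{j=1}^m (−1)^{h+j} ξ^h_{x,m−j} S(x+j) det( ξ^l_{x+j−r,m−r} Y_l(x+j−r) )_{l∈{1,…,m}\{h\}, r∈{1,…,m}\{j\}} are polynomials in x, and let P_S be a polynomial satisfying P_S(x) − P_S(x−1) = S(x)Ω(x). Then for every integer 0 ≤ n ≤ M one has the identity in ℝ[λ]: P_S(D_p)(q_n) + Σ_{h=1}^m M_h(D_p)( D_h( Y_h(D_p)(q_n) ) ) = P_S(n) · q_n. -/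
open Polynomial Finset

noncomputable section

/-- `ξ_{x,i} = ∏_{j=0}^{i−1} ε(x−j)` (for `i ≥ 0`). -/
def xi (ε : ℝ → ℝ) (x : ℝ) (i : ℕ) : ℝ := ∏ j ∈ Finset.range i, ε (x - j)

/-- The quasi-Casorati polynomial `q_n` of Theorem 3.2: an `(m+2)×(m+2)` determinant whose
first row consists of the polynomials `(−1)^j p_{n−j}` (zero for `n−j<0`) and whose further
rows are the constants `ξ^h_{n−j,m+1−j} Y_h(n−j)`.  Here the number of `𝒟`-operators is
`m+1`. -/
def qdet (m : ℕ) (p : ℕ → Polynomial ℝ) (ε : Fin (m + 1) → ℝ → ℝ)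
    (Y : Fin (m + 1) → Polynomial ℝ) (n : ℕ) : Polynomial ℝ :=
  Matrix.det (Matrix.of fun i j : Fin (m + 2) =>
    if h0 : (i : ℕ) = 0 then
      Polynomial.C ((-1 : ℝ) ^ (j : ℕ)) * (if (j : ℕ) ≤ n then p (n - (j : ℕ)) else 0)
    else
      Polynomial.C
        (xi (ε ⟨(i : ℕ) - 1, by have := i.isLt; omega⟩) ((n : ℝ) - (j : ℕ)) (m + 1 - (j : ℕ)) *
          (Y ⟨(i : ℕ) - 1, by have := i.isLt; omega⟩).eval ((n : ℝ) - (j : ℕ))))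

/-- The Casorati determinant `Ω(x) = det( ξ^l_{x−j,m−j} Y_l(x−j) )_{l,j=1..m}` (with `m+1`
operators). -/
def casdet (m : ℕ) (ε : Fin (m + 1) → ℝ → ℝ) (Y : Fin (m + 1) → Polynomial ℝ) (x : ℝ) : ℝ :=
  Matrix.det (Matrix.of fun l j : Fin (m + 1) =>
    xi (ε l) (x - ((j : ℕ) + 1)) (m + 1 - ((j : ℕ) + 1)) * (Y l).eval (x - ((j : ℕ) + 1)))

/-- column vector entries for the big Casorati matrix -/
def Uaux (m : ℕ) (ε : Fin (m + 1) → ℝ → ℝ) (Y : Fin (m + 1) → Polynomial ℝ) (x : ℝ)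
    (i : ℕ) (l : Fin (m + 1)) : ℝ :=
  xi (ε l) (x - i) (m + 1 - i) * (Y l).eval (x - i)

def bdetAux (m : ℕ) (ε : Fin (m + 1) → ℝ → ℝ) (Y : Fin (m + 1) → Polynomial ℝ) (x : ℝ)
    (c : Fin (m + 2)) : ℝ :=
  Matrix.det (Matrix.of fun l r : Fin (m + 1) => Uaux m ε Y x ((c.succAbove r : Fin (m + 2)) : ℕ) l)

def bcoAux (m : ℕ) (ε : Fin (m + 1) → ℝ → ℝ) (Y : Fin (m + 1) → Polynomial ℝ) (x : ℝ)
    (k : ℕ) : ℝ :=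
  if h : k ≤ m + 1 then bdetAux m ε Y x ⟨k, by omega⟩ else 0

def BmatAux (m : ℕ) (ε : Fin (m + 1) → ℝ → ℝ) (Y : Fin (m + 1) → Polynomial ℝ) (x0 : ℝ)
    (j : Fin (m + 1)) (pt : ℝ) (d : ℕ) : Matrix (Fin (m + 1)) (Fin (m + 1)) ℝ :=
  Matrix.of fun h r =>
    if r = j then xi (ε h) pt d * (Y h).eval pt
    else
      xi (ε h) (x0 + ((j : ℕ) + 1) - ((r : ℕ) + 1)) (m + 1 - ((r : ℕ) + 1)) *
        (Y h).eval (x0 + ((j : ℕ) + 1) - ((r : ℕ) + 1))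

def PdetAux (m : ℕ) (ε : Fin (m + 1) → ℝ → ℝ) (Y : Fin (m + 1) → Polynomial ℝ) (x0 : ℝ)
    (j h : Fin (m + 1)) : ℝ :=
  Matrix.det (Matrix.of fun l r : Fin m =>
    xi (ε (h.succAbove l)) (x0 + ((j : ℕ) + 1) - (((j.succAbove r : Fin (m + 1)) : ℕ) + 1))
        (m + 1 - (((j.succAbove r : Fin (m + 1)) : ℕ) + 1)) *
      (Y (h.succAbove l)).eval (x0 + ((j : ℕ) + 1) - (((j.succAbove r : Fin (m + 1)) : ℕ) + 1)))

lemma xi_add (ε : ℝ → ℝ) (x : ℝ) (a b : ℕ) :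
    xi ε x (a + b) = xi ε x a * xi ε (x - a) b := by
  unfold xi
  rw [Finset.prod_range_add]
  congr 1
  refine Finset.prod_congr rfl fun j _ => ?_
  congr 1
  push_cast
  ring

lemma det_last_row_comb {N : ℕ} (A : Matrix (Fin (N + 1)) (Fin (N + 1)) ℝ) (w : Fin N → ℝ)
    (hA : ∀ i, A (Fin.last N) i = ∑ l, w l * A l.castSucc i) : A.det = 0 := by
  have h1 : A = A.updateRow (Fin.last N) (∑ l : Fin (N + 1), (fun i : Fin (N + 1) =>
      if h : (i : ℕ) < N then w ⟨i, h⟩ else 0) l • A l) := by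
    ext i j
    rcases eq_or_ne i (Fin.last N) with rfl | hi
    · rw [Matrix.updateRow_self]
      rw [hA]
      rw [Finset.sum_apply]
      simp only [Fin.sum_univ_castSucc]
      simp [Fin.is_lt]
    · rw [Matrix.updateRow_ne hi]
  rw [h1, Matrix.det_updateRow_sum]
  simp [Fin.last]

lemma Bmat_expand (m : ℕ) (ε : Fin (m + 1) → ℝ → ℝ) (Y : Fin (m + 1) → Polynomial ℝ) (x0 : ℝ)
    (j : Fin (m + 1)) (pt : ℝ) (d : ℕ) :
    (BmatAux m ε Y x0 j pt d).det =
      ∑ h : Fin (m + 1), (-1 : ℝ) ^ ((h : ℕ) + (j : ℕ)) * (xi (ε h) pt d * (Y h).eval pt) *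
        PdetAux m ε Y x0 j h := by
  rw [Matrix.det_succ_column (BmatAux m ε Y x0 j pt d) j]
  refine Finset.sum_congr rfl fun h _ => ?_
  congr 1
  · congr 1
    simp [BmatAux]
  · unfold PdetAux
    congr 1
    ext l r
    simp [BmatAux, Matrix.submatrix_apply, Fin.succAbove_ne j r]

lemma Bmat_det_zero (m : ℕ) (ε : Fin (m + 1) → ℝ → ℝ) (Y : Fin (m + 1) → Polynomial ℝ) (x0 : ℝ)
    (j : Fin (m + 1)) (pt : ℝ) (d : ℕ) (r' : Fin (m + 1)) (hne : r' ≠ j)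
    (hpt : pt = x0 + ((j : ℕ) + 1) - ((r' : ℕ) + 1)) (hd : d = m + 1 - ((r' : ℕ) + 1)) :
    (BmatAux m ε Y x0 j pt d).det = 0 := by
  rw [← Matrix.det_transpose]
  refine Matrix.det_zero_of_row_eq (hne.symm) ?_
  funext h
  simp only [Matrix.transpose_apply, BmatAux, Matrix.of_apply, if_pos rfl, if_neg hne, hpt, hd]
  simp

lemma Bmat_det_cas (m : ℕ) (ε : Fin (m + 1) → ℝ → ℝ) (Y : Fin (m + 1) → Polynomial ℝ) (x0 : ℝ)
    (j : Fin (m + 1)) (pt : ℝ) (d : ℕ) (hpt : pt = x0) (hd : d = m + 1 - ((j : ℕ) + 1)) :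
    (BmatAux m ε Y x0 j pt d).det = casdet m ε Y (x0 + ((j : ℕ) + 1)) := by
  unfold casdet BmatAux
  congr 1
  ext h r
  rcases eq_or_ne r j with rfl | hr
  · simp only [Matrix.of_apply, if_pos rfl, hpt, hd]
    norm_num
  · simp only [Matrix.of_apply, if_neg hr]

lemma GP (m : ℕ) (ε : Fin (m + 1) → ℝ → ℝ) (Y : Fin (m + 1) → Polynomial ℝ) (x : ℝ)
    (k : ℕ) (j : Fin (m + 1)) :
    ∑ i : Fin (m + 2), (-1 : ℝ) ^ (m + 1 + (i : ℕ)) *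
        (BmatAux m ε Y (x - k) j (x - (i : ℕ)) ((m + 1 - (i : ℕ)) + (k - 1 - (j : ℕ)))).det *
        bdetAux m ε Y x i = 0 := by
  classical
  set w : Fin (m + 1) → ℝ := fun h =>
    (-1 : ℝ) ^ ((h : ℕ) + (j : ℕ)) * PdetAux m ε Y (x - k) j h *
      xi (ε h) (x - ((m : ℝ) + 1)) (k - 1 - (j : ℕ)) with hw
  set C : Matrix (Fin (m + 2)) (Fin (m + 2)) ℝ := Matrix.of
    (Fin.lastCases (fun i : Fin (m + 2) => ∑ h, w h * Uaux m ε Y x (i : ℕ) h)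
      (fun l : Fin (m + 1) => fun i : Fin (m + 2) => Uaux m ε Y x (i : ℕ) l)) with hCdef
  have hrow : ∀ l : Fin (m + 1), ∀ i, C l.castSucc i = Uaux m ε Y x (i : ℕ) l := by
    intro l i
    simp only [hCdef, Matrix.of_apply, Fin.lastCases_castSucc]
  have hlast : ∀ i, C (Fin.last (m + 1)) i = ∑ h, w h * Uaux m ε Y x (i : ℕ) h := by
    intro i
    simp only [hCdef, Matrix.of_apply, Fin.lastCases_last]
  have hC0 : C.det = 0 := by
    refine det_last_row_comb C w fun i => ?_
    rw [hlast]
    exact Finset.sum_congr rfl fun h _ => by rw [hrow]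
  calc
    ∑ i : Fin (m + 2), (-1 : ℝ) ^ (m + 1 + (i : ℕ)) *
        (BmatAux m ε Y (x - k) j (x - (i : ℕ)) ((m + 1 - (i : ℕ)) + (k - 1 - (j : ℕ)))).det *
        bdetAux m ε Y x i
      = ∑ i : Fin (m + 2), (-1 : ℝ) ^ (((Fin.last (m + 1)) : ℕ) + (i : ℕ)) *
          C (Fin.last (m + 1)) i *
          (C.submatrix (Fin.last (m + 1)).succAbove i.succAbove).det := by
        refine Finset.sum_congr rfl fun i _ => ?_
        have hival : (i : ℕ) ≤ m + 1 := by omega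
        have hcast : ((m + 1 - (i : ℕ) : ℕ) : ℝ) = (m : ℝ) + 1 - (i : ℕ) := by
          push_cast [Nat.cast_sub hival]
          ring
        congr 1
        · congr 1
          rw [hlast, Bmat_expand]
          refine Finset.sum_congr rfl fun h _ => ?_
          rw [hw]
          simp only []
          unfold Uaux
          rw [xi_add, show (x - (i : ℕ)) - ((m + 1 - (i : ℕ) : ℕ) : ℝ) = x - ((m : ℝ) + 1) by
            rw [hcast]; ring]
          ring
        · unfold bdetAux
          congr 1
          ext l r
          simp only [Matrix.submatrix_apply, Fin.succAbove_last, Matrix.of_apply]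
          rw [hrow]
    _ = C.det := (Matrix.det_succ_row C _).symm
    _ = 0 := hC0

lemma core (m : ℕ) (ε : Fin (m + 1) → ℝ → ℝ) (Y : Fin (m + 1) → Polynomial ℝ) (x : ℝ)
    (k : ℕ) (j : Fin (m + 1)) :
    ∑ c ∈ Finset.range k, (-1 : ℝ) ^ (k - c + 1) * bcoAux m ε Y x c *
        (BmatAux m ε Y (x - k) j (x - (c : ℕ)) ((k - c) + (m - (j : ℕ)))).det =
      if (j : ℕ) < k then casdet m ε Y (x - k + ((j : ℕ) + 1)) * bcoAux m ε Y x k else 0 := by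
  classical
  rcases lt_or_ge ((j : ℕ)) k with hj | hj
  swap
  · -- j ≥ k : every term vanishes
    rw [if_neg (by omega)]
    refine Finset.sum_eq_zero fun c hc => ?_
    rw [Finset.mem_range] at hc
    have hcj : c < (j : ℕ) := by omega
    rw [Bmat_det_zero m ε Y (x - k) j _ _ ⟨(j : ℕ) - k + c, by omega⟩
      (Fin.ne_of_val_ne (by simp; omega)) ?_ (by simp; omega), mul_zero]
    have : (((j : ℕ) - k + c : ℕ) : ℝ) = (j : ℕ) - (k : ℝ) + c := by
      push_cast [Nat.cast_sub (by omega : k ≤ (j : ℕ))]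
      ring
    rw [this]
    ring
  · -- j < k
    set g : ℕ → ℝ := fun i => (-1 : ℝ) ^ (m + 1 + i) *
      (BmatAux m ε Y (x - k) j (x - (i : ℕ)) ((m + 1 - i) + (k - 1 - (j : ℕ)))).det *
      bcoAux m ε Y x i with hg
    have hbb : ∀ i : Fin (m + 2), bcoAux m ε Y x (i : ℕ) = bdetAux m ε Y x i := by
      intro i
      rw [bcoAux, dif_pos (by omega : (i : ℕ) ≤ m + 1)]
    have hGP : ∑ i ∈ Finset.range (m + 2), g i = 0 := by
      rw [← Fin.sum_univ_eq_sum_range g (m + 2), ← GP m ε Y x k j]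
      refine Finset.sum_congr rfl fun i _ => ?_
      rw [hg]
      simp only []
      rw [hbb]
    have hterm : ∀ c, c < k → (-1 : ℝ) ^ (k - c + 1) * bcoAux m ε Y x c *
        (BmatAux m ε Y (x - k) j (x - (c : ℕ)) ((k - c) + (m - (j : ℕ)))).det
        = (-1 : ℝ) ^ (m + k) * g c := by
      intro c hc
      rcases le_or_gt c (m + 1) with hcm | hcm
      · have hlen : (k - c) + (m - (j : ℕ)) = (m + 1 - c) + (k - 1 - (j : ℕ)) := by omega
        have hsgn : ((-1 : ℝ)) ^ (m + k) * (-1) ^ (m + 1 + c) = (-1) ^ (k - c + 1) := by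
          rw [← pow_add, show m + k + (m + 1 + c) = (k - c + 1) + 2 * (m + c) by omega,
            pow_add, pow_mul]
          norm_num
        rw [hg]
        simp only []
        rw [hlen, ← hsgn]
        ring
      · rw [hg]
        simp only []
        rw [bcoAux, dif_neg (by omega)]
        ring
    have hL : ∑ c ∈ Finset.range k, (-1 : ℝ) ^ (k - c + 1) * bcoAux m ε Y x c *
        (BmatAux m ε Y (x - k) j (x - (c : ℕ)) ((k - c) + (m - (j : ℕ)))).det
        = (-1 : ℝ) ^ (m + k) * ∑ c ∈ Finset.range k, g c := by
      rw [Finset.mul_sum]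
      refine Finset.sum_congr rfl fun c hc => ?_
      exact hterm c (Finset.mem_range.mp hc)
    rw [hL, if_pos hj]
    rcases le_or_gt k (m + 1) with hkm | hkm
    · -- k ≤ m+1 : GP splits off the i = k term
      have hcons : (∑ c ∈ Finset.Ico 0 k, g c) + ∑ c ∈ Finset.Ico k (m + 2), g c
          = ∑ c ∈ Finset.Ico 0 (m + 2), g c :=
        Finset.sum_Ico_consecutive g (Nat.zero_le k) (by omega)
      have hIco : ∑ c ∈ Finset.Ico k (m + 2), g c = g k := by
        refine Finset.sum_eq_single_of_mem k (Finset.mem_Ico.mpr ⟨le_refl k, by omega⟩)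
          fun i hi hne => ?_
        rw [Finset.mem_Ico] at hi
        have hik : k < i := by omega
        rw [hg]
        simp only []
        rw [Bmat_det_zero m ε Y (x - k) j _ _ ⟨i + (j : ℕ) - k, by omega⟩
          (Fin.ne_of_val_ne (by simp; omega)) ?_ (by simp; omega)]
        · ring
        · have : ((i + (j : ℕ) - k : ℕ) : ℝ) = (i : ℝ) + (j : ℕ) - k := by
            push_cast [Nat.cast_sub (by omega : k ≤ i + (j : ℕ))]
            ring
          rw [this]
          ring
      have hgk : g k = (-1 : ℝ) ^ (m + 1 + k) * (casdet m ε Y (x - k + ((j : ℕ) + 1)) *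
          bcoAux m ε Y x k) := by
        rw [hg]
        simp only []
        rw [Bmat_det_cas m ε Y (x - k) j _ _ rfl (by omega)]
        ring
      have hrk : ∑ c ∈ Finset.range k, g c = -g k := by
        have h0 : ∑ c ∈ Finset.Ico 0 (m + 2), g c = 0 := by
          rw [← Finset.range_eq_Ico]
          exact hGP
        rw [Finset.range_eq_Ico]
        rw [hIco] at hcons
        linarith [hcons, h0]
      rw [hrk, hgk]
      have : ((-1 : ℝ)) ^ (m + k) * (-1) ^ (m + 1 + k) = -1 := by
        rw [← pow_add, show m + k + (m + 1 + k) = 2 * (m + k) + 1 by omega, pow_succ, pow_mul]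
        norm_num
      calc (-1 : ℝ) ^ (m + k) * -((-1 : ℝ) ^ (m + 1 + k) * (casdet m ε Y (x - k + ((j : ℕ) + 1)) *
          bcoAux m ε Y x k))
          = -(((-1 : ℝ)) ^ (m + k) * (-1) ^ (m + 1 + k)) * (casdet m ε Y (x - k + ((j : ℕ) + 1)) *
          bcoAux m ε Y x k) := by ring
        _ = _ := by rw [this]; ring
    · -- k > m+1 : everything vanishes
      have hz : ∑ c ∈ Finset.range k, g c = 0 := by
        rw [Finset.range_eq_Ico, ← Finset.sum_Ico_consecutive g (Nat.zero_le (m + 2)) (by omega)]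
        rw [← Finset.range_eq_Ico, hGP, zero_add]
        refine Finset.sum_eq_zero fun i hi => ?_
        rw [Finset.mem_Ico] at hi
        rw [hg]
        simp only []
        rw [bcoAux, dif_neg (by omega)]
        ring
      rw [hz, bcoAux, dif_neg (by omega)]
      ring

lemma tele (PS PSO : Polynomial ℝ) (hPS : ∀ x : ℝ, PS.eval x - PS.eval (x - 1) = PSO.eval x)
    (x : ℝ) (k : ℕ) : PS.eval x - PS.eval (x - k) = ∑ t ∈ Finset.range k, PSO.eval (x - t) := by
  induction k with
  | zero => simp
  | succ k ih =>
      rw [Finset.sum_range_succ, ← ih, ← hPS (x - k)]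
      have : x - ((k : ℕ) + 1 : ℕ) = x - k - 1 := by push_cast; ring
      rw [this]
      ring

lemma scalar (m : ℕ) (ε : Fin (m + 1) → ℝ → ℝ) (Y : Fin (m + 1) → Polynomial ℝ)
    (S : ℝ → ℝ) (PSO : Polynomial ℝ) (PM : Fin (m + 1) → Polynomial ℝ) (PS : Polynomial ℝ)
    (hPSO : ∀ x : ℝ, S x * casdet m ε Y x = PSO.eval x)
    (hPM : ∀ h : Fin (m + 1), ∀ x : ℝ,
      (∑ j : Fin (m + 1), (-1 : ℝ) ^ ((h : ℕ) + (j : ℕ)) *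
          xi (ε h) x (m + 1 - ((j : ℕ) + 1)) * S (x + ((j : ℕ) + 1)) * PdetAux m ε Y x j h) =
        (PM h).eval x)
    (hPS : ∀ x : ℝ, PS.eval x - PS.eval (x - 1) = PSO.eval x)
    (x : ℝ) (k : ℕ) :
    PS.eval (x - k) * bcoAux m ε Y x k +
        ∑ h : Fin (m + 1), (PM h).eval (x - k) *
          (∑ c ∈ Finset.range k, bcoAux m ε Y x c * (Y h).eval (x - c) *
            ((-1 : ℝ) ^ (k - c + 1) * xi (ε h) (x - c) (k - c))) =
      PS.eval x * bcoAux m ε Y x k := by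
  classical
  have hmain : ∑ h : Fin (m + 1), (PM h).eval (x - k) *
      (∑ c ∈ Finset.range k, bcoAux m ε Y x c * (Y h).eval (x - c) *
        ((-1 : ℝ) ^ (k - c + 1) * xi (ε h) (x - c) (k - c)))
      = (PS.eval x - PS.eval (x - k)) * bcoAux m ε Y x k := by
    calc
      ∑ h : Fin (m + 1), (PM h).eval (x - k) *
          (∑ c ∈ Finset.range k, bcoAux m ε Y x c * (Y h).eval (x - c) *
            ((-1 : ℝ) ^ (k - c + 1) * xi (ε h) (x - c) (k - c)))
        = ∑ h : Fin (m + 1), ∑ j : Fin (m + 1),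
            ((-1 : ℝ) ^ ((h : ℕ) + (j : ℕ)) * xi (ε h) (x - k) (m + 1 - ((j : ℕ) + 1)) *
              S ((x - k) + ((j : ℕ) + 1)) * PdetAux m ε Y (x - k) j h) *
            (∑ c ∈ Finset.range k, bcoAux m ε Y x c * (Y h).eval (x - c) *
              ((-1 : ℝ) ^ (k - c + 1) * xi (ε h) (x - c) (k - c))) := by
          refine Finset.sum_congr rfl fun h _ => ?_
          rw [← hPM h (x - k), Finset.sum_mul]
      _ = ∑ j : Fin (m + 1), ∑ h : Fin (m + 1),
            ((-1 : ℝ) ^ ((h : ℕ) + (j : ℕ)) * xi (ε h) (x - k) (m + 1 - ((j : ℕ) + 1)) *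
              S ((x - k) + ((j : ℕ) + 1)) * PdetAux m ε Y (x - k) j h) *
            (∑ c ∈ Finset.range k, bcoAux m ε Y x c * (Y h).eval (x - c) *
              ((-1 : ℝ) ^ (k - c + 1) * xi (ε h) (x - c) (k - c))) := Finset.sum_comm
      _ = ∑ j : Fin (m + 1), S ((x - k) + ((j : ℕ) + 1)) *
            ∑ c ∈ Finset.range k, (-1 : ℝ) ^ (k - c + 1) * bcoAux m ε Y x c *
              (BmatAux m ε Y (x - k) j (x - (c : ℕ)) ((k - c) + (m - (j : ℕ)))).det := by
          refine Finset.sum_congr rfl fun j _ => ?_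
          rw [Finset.mul_sum]
          calc
            ∑ h : Fin (m + 1),
              ((-1 : ℝ) ^ ((h : ℕ) + (j : ℕ)) * xi (ε h) (x - k) (m + 1 - ((j : ℕ) + 1)) *
                S ((x - k) + ((j : ℕ) + 1)) * PdetAux m ε Y (x - k) j h) *
              (∑ c ∈ Finset.range k, bcoAux m ε Y x c * (Y h).eval (x - c) *
                ((-1 : ℝ) ^ (k - c + 1) * xi (ε h) (x - c) (k - c)))
              = ∑ h : Fin (m + 1), ∑ c ∈ Finset.range k,
                ((-1 : ℝ) ^ ((h : ℕ) + (j : ℕ)) * xi (ε h) (x - k) (m + 1 - ((j : ℕ) + 1)) *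
                  S ((x - k) + ((j : ℕ) + 1)) * PdetAux m ε Y (x - k) j h) *
                (bcoAux m ε Y x c * (Y h).eval (x - c) *
                  ((-1 : ℝ) ^ (k - c + 1) * xi (ε h) (x - c) (k - c))) := by
                refine Finset.sum_congr rfl fun h _ => ?_
                rw [Finset.mul_sum]
            _ = ∑ c ∈ Finset.range k, ∑ h : Fin (m + 1),
                ((-1 : ℝ) ^ ((h : ℕ) + (j : ℕ)) * xi (ε h) (x - k) (m + 1 - ((j : ℕ) + 1)) *
                  S ((x - k) + ((j : ℕ) + 1)) * PdetAux m ε Y (x - k) j h) *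
                (bcoAux m ε Y x c * (Y h).eval (x - c) *
                  ((-1 : ℝ) ^ (k - c + 1) * xi (ε h) (x - c) (k - c))) := Finset.sum_comm
            _ = ∑ c ∈ Finset.range k, S ((x - k) + ((j : ℕ) + 1)) *
                ((-1 : ℝ) ^ (k - c + 1) * bcoAux m ε Y x c *
                  (BmatAux m ε Y (x - k) j (x - (c : ℕ)) ((k - c) + (m - (j : ℕ)))).det) := by
                refine Finset.sum_congr rfl fun c hc => ?_
                rw [Finset.mem_range] at hc
                rw [Bmat_expand, Finset.mul_sum, Finset.mul_sum]
                refine Finset.sum_congr rfl fun h _ => ?_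
                rw [xi_add]
                have hc1 : ((k - c : ℕ) : ℝ) = (k : ℝ) - c := by
                  push_cast [Nat.cast_sub (le_of_lt hc)]
                  ring
                have hc2 : (x - (c : ℕ)) - ((k - c : ℕ) : ℝ) = x - k := by
                  rw [hc1]; ring
                rw [hc2]
                have hj1 : m + 1 - ((j : ℕ) + 1) = m - (j : ℕ) := by omega
                rw [hj1]
                ring
      _ = ∑ j : Fin (m + 1),
            (if (j : ℕ) < k then PSO.eval ((x - k) + ((j : ℕ) + 1)) * bcoAux m ε Y x k
             else 0) := by
          refine Finset.sum_congr rfl fun j _ => ?_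
          rw [core]
          split_ifs with hjk
          · rw [← hPSO ((x - k) + ((j : ℕ) + 1))]
            ring
          · ring
      _ = (PS.eval x - PS.eval (x - k)) * bcoAux m ε Y x k := by
          rw [tele PS PSO hPS x k, Finset.sum_mul]
          rcases le_or_gt k (m + 1) with hkm | hkm
          · rw [Fin.sum_univ_eq_sum_range
              (fun i => if i < k then PSO.eval ((x - k) + ((i : ℕ) + 1)) * bcoAux m ε Y x k
                else 0) (m + 1)]
            rw [← Finset.sum_subset (Finset.range_subset_range.mpr hkm)
              (fun i _ hi => if_neg (by rw [Finset.mem_range] at hi; omega))]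
            rw [← Finset.sum_range_reflect
              (fun t => PSO.eval (x - (t : ℕ)) * bcoAux m ε Y x k) k]
            refine Finset.sum_congr rfl fun i hi => ?_
            rw [Finset.mem_range] at hi
            rw [if_pos hi]
            have : (((k - 1 - i : ℕ)) : ℝ) = (k : ℝ) - 1 - i := by
              push_cast [Nat.cast_sub (by omega : i ≤ k - 1), Nat.cast_sub (by omega : 1 ≤ k)]
              ring
            rw [this]
            congr 2
            ring
          · have hb : bcoAux m ε Y x k = 0 := by rw [bcoAux, dif_neg (by omega)]
            rw [hb]
            simp
  linear_combination hmain

lemma bco_fin (m : ℕ) (ε : Fin (m + 1) → ℝ → ℝ) (Y : Fin (m + 1) → Polynomial ℝ) (x : ℝ)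
    (i : Fin (m + 2)) : bcoAux m ε Y x (i : ℕ) = bdetAux m ε Y x i := by
  rw [bcoAux, dif_pos (by omega : (i : ℕ) ≤ m + 1)]

lemma aeval_eig (Dp : Module.End ℝ (Polynomial ℝ)) (p : ℕ → Polynomial ℝ)
    (hDp : ∀ n : ℕ, Dp (p n) = (n : ℝ) • p n) (Q : Polynomial ℝ) (k : ℕ) :
    (Polynomial.aeval Dp Q) (p k) = Q.eval (k : ℝ) • p k := by
  have hpow : ∀ e : ℕ, (Dp ^ e) (p k) = ((k : ℝ) ^ e) • p k := by
    intro e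
    induction e with
    | zero => simp
    | succ e ih =>
        rw [pow_succ, Module.End.mul_apply, hDp, map_smul, ih, smul_smul, pow_succ]
        congr 1
        ring
  induction Q using Polynomial.induction_on' with
  | add f g hf hg => rw [map_add, LinearMap.add_apply, hf, hg, eval_add, add_smul]
  | monomial e a =>
      rw [Polynomial.aeval_monomial, Module.End.mul_apply, hpow,
        Module.algebraMap_end_apply, eval_monomial, smul_smul]

lemma reindex {M : Type*} [AddCommMonoid M] (n : ℕ) (F : ℕ → ℕ → M) :
    ∑ k ∈ Finset.range (n + 1), ∑ i ∈ Finset.Icc 1 (n - k), F k i =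
      ∑ K ∈ Finset.range (n + 1), ∑ c ∈ Finset.range K, F c (K - c) := by
  have h1 : ∀ k, k ≤ n → ∑ i ∈ Finset.Icc 1 (n - k), F k i =
      ∑ K ∈ Finset.range (n + 1), (if k < K then F k (K - k) else 0) := by
    intro k hk
    have e1 : ∑ i ∈ Finset.Icc 1 (n - k), F k i =
        ∑ K ∈ Finset.Ico (k + 1) (n + 1), (if k < K then F k (K - k) else 0) := by
      refine Finset.sum_nbij' (fun i => k + i) (fun K => K - k) ?_ ?_ ?_ ?_ ?_
      · intro a ha
        rw [Finset.mem_Icc] at ha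
        simp only [Finset.mem_Ico]
        omega
      · intro a ha
        rw [Finset.mem_Ico] at ha
        simp only [Finset.mem_Icc]
        omega
      · intro a ha
        omega
      · intro a ha
        rw [Finset.mem_Ico] at ha
        omega
      · intro a ha
        rw [Finset.mem_Icc] at ha
        rw [if_pos (by omega), Nat.add_sub_cancel_left]
    rw [e1]
    refine Finset.sum_subset ?_ fun i _ hi => ?_
    · intro a ha
      rw [Finset.mem_Ico] at ha
      rw [Finset.mem_range]
      omega
    · rw [Finset.mem_Ico] at hi
      rw [Finset.mem_range] at *
      exact if_neg (by omega)
  calc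
    ∑ k ∈ Finset.range (n + 1), ∑ i ∈ Finset.Icc 1 (n - k), F k i
      = ∑ k ∈ Finset.range (n + 1), ∑ K ∈ Finset.range (n + 1),
          (if k < K then F k (K - k) else 0) := by
        refine Finset.sum_congr rfl fun k hk => ?_
        rw [Finset.mem_range] at hk
        exact h1 k (by omega)
    _ = ∑ K ∈ Finset.range (n + 1), ∑ k ∈ Finset.range (n + 1),
          (if k < K then F k (K - k) else 0) := Finset.sum_comm
    _ = ∑ K ∈ Finset.range (n + 1), ∑ c ∈ Finset.range K, F c (K - c) := by
        refine Finset.sum_congr rfl fun K hK => ?_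
        rw [Finset.mem_range] at hK
        rw [← Finset.sum_subset (Finset.range_subset_range.mpr (by omega : K ≤ n + 1))
          (fun i _ hi => if_neg (by rw [Finset.mem_range] at hi; omega))]
        refine Finset.sum_congr rfl fun c hc => ?_
        rw [Finset.mem_range] at hc
        rw [if_pos hc]

lemma qdet_eq (m : ℕ) (p : ℕ → Polynomial ℝ) (ε : Fin (m + 1) → ℝ → ℝ)
    (Y : Fin (m + 1) → Polynomial ℝ) (n : ℕ) :
    qdet m p ε Y n =
      ∑ k ∈ Finset.range (n + 1), bcoAux m ε Y (n : ℝ) k • p (n - k) := by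
  classical
  unfold qdet
  set A : Matrix (Fin (m + 2)) (Fin (m + 2)) (Polynomial ℝ) := Matrix.of fun i j : Fin (m + 2) =>
    if h0 : (i : ℕ) = 0 then
      Polynomial.C ((-1 : ℝ) ^ (j : ℕ)) * (if (j : ℕ) ≤ n then p (n - (j : ℕ)) else 0)
    else
      Polynomial.C
        (xi (ε ⟨(i : ℕ) - 1, by have := i.isLt; omega⟩) ((n : ℝ) - (j : ℕ)) (m + 1 - (j : ℕ)) *
          (Y ⟨(i : ℕ) - 1, by have := i.isLt; omega⟩).eval ((n : ℝ) - (j : ℕ))) with hA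
  set f : ℕ → Polynomial ℝ :=
    fun k => bcoAux m ε Y (n : ℝ) k • (if k ≤ n then p (n - k) else 0) with hf
  calc
    A.det = ∑ j : Fin (m + 2), (-1) ^ (j : ℕ) * A 0 j *
        (A.submatrix Fin.succ j.succAbove).det := Matrix.det_succ_row_zero A
    _ = ∑ j : Fin (m + 2), f (j : ℕ) := by
        refine Finset.sum_congr rfl fun j _ => ?_
        have h0j : A 0 j =
            Polynomial.C ((-1 : ℝ) ^ (j : ℕ)) * (if (j : ℕ) ≤ n then p (n - (j : ℕ)) else 0) := by
          rw [hA]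
          simp only [Matrix.of_apply]
          rw [dif_pos (show ((0 : Fin (m + 2)) : ℕ) = 0 from rfl)]
        have hsub : A.submatrix Fin.succ j.succAbove =
            (Matrix.of fun l r : Fin (m + 1) =>
              Uaux m ε Y (n : ℝ) ((j.succAbove r : Fin (m + 2)) : ℕ) l).map Polynomial.C := by
          ext l r
          rw [hA]
          simp only [Matrix.submatrix_apply, Matrix.of_apply, Matrix.map_apply]
          rw [dif_neg (by simp [Fin.val_succ])]
          simp [Uaux, Fin.val_succ, Nat.add_sub_cancel]
        have hmapeq : (Matrix.of fun l r : Fin (m + 1) =>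
            Uaux m ε Y (n : ℝ) ((j.succAbove r : Fin (m + 2)) : ℕ) l).map Polynomial.C
            = (Polynomial.C : ℝ →+* Polynomial ℝ).mapMatrix
              (Matrix.of fun l r : Fin (m + 1) =>
                Uaux m ε Y (n : ℝ) ((j.succAbove r : Fin (m + 2)) : ℕ) l) := rfl
        rw [h0j, hsub, hmapeq, ← RingHom.map_det]
        have hdet : (Matrix.of fun l r : Fin (m + 1) =>
            Uaux m ε Y (n : ℝ) ((j.succAbove r : Fin (m + 2)) : ℕ) l).det
            = bdetAux m ε Y (n : ℝ) j := rfl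
        rw [hdet, hf]
        simp only []
        rw [bco_fin]
        have hsgn : ((-1 : Polynomial ℝ)) ^ (j : ℕ) * Polynomial.C ((-1 : ℝ) ^ (j : ℕ)) = 1 := by
          rw [map_pow, map_neg, map_one, ← mul_pow]
          norm_num
        rw [Polynomial.smul_eq_C_mul]
        calc
          (-1 : Polynomial ℝ) ^ (j : ℕ) *
              (Polynomial.C ((-1 : ℝ) ^ (j : ℕ)) * (if (j : ℕ) ≤ n then p (n - (j : ℕ)) else 0)) *
              Polynomial.C (bdetAux m ε Y (n : ℝ) j)
            = ((-1 : Polynomial ℝ) ^ (j : ℕ) * Polynomial.C ((-1 : ℝ) ^ (j : ℕ))) *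
                (Polynomial.C (bdetAux m ε Y (n : ℝ) j) *
                  (if (j : ℕ) ≤ n then p (n - (j : ℕ)) else 0)) := by ring
          _ = _ := by rw [hsgn, one_mul]
    _ = ∑ k ∈ Finset.range (m + 2), f k := Fin.sum_univ_eq_sum_range f (m + 2)
    _ = ∑ k ∈ Finset.range (max (m + 2) (n + 1)), f k := by
        refine Finset.sum_subset (Finset.range_subset_range.mpr (le_max_left _ _)) fun i _ hi => ?_
        rw [Finset.mem_range] at hi
        rw [hf]
        simp only []
        rw [bcoAux, dif_neg (by omega), zero_smul]
    _ = ∑ k ∈ Finset.range (n + 1), f k := by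
        refine (Finset.sum_subset (Finset.range_subset_range.mpr (le_max_right _ _))
          fun i _ hi => ?_).symm
        rw [Finset.mem_range] at hi
        rw [hf]
        simp only []
        rw [if_neg (by omega), smul_zero]
    _ = ∑ k ∈ Finset.range (n + 1), bcoAux m ε Y (n : ℝ) k • p (n - k) := by
        refine Finset.sum_congr rfl fun k hk => ?_
        rw [Finset.mem_range] at hk
        rw [hf]
        simp only []
        rw [if_pos (by omega)]

/-- Theorem 3.2 (`𝒟`-operators produce eigenfunctions): with `m+1` `𝒟`-operators `Dop h`
for the polynomials `(p_n)` (eigenfunctions of `Dp` with eigenvalue `n`), arbitrary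
polynomials `Y_h`, and a rational function `S` making `S·Ω` and every `M_h` polynomial,
the Casorati polynomials `q_n` satisfy
`P_S(D_p)(q_n) + Σ_h M_h(D_p) 𝒟_h Y_h(D_p) (q_n) = P_S(n) q_n` for `0 ≤ n ≤ M`. -/
theorem casorati_eigenfunctions (m M : ℕ)
    (p : ℕ → Polynomial ℝ) (hpdeg : ∀ n : ℕ, (p n).degree = (n : ℕ))
    (Dp : Module.End ℝ (Polynomial ℝ)) (hDp : ∀ n : ℕ, Dp (p n) = (n : ℝ) • p n)
    (ε : Fin (m + 1) → ℝ → ℝ)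
    (Dop : Fin (m + 1) → Module.End ℝ (Polynomial ℝ))
    (hDop : ∀ h : Fin (m + 1), ∀ n : ℕ, Dop h (p n) =
      ∑ j ∈ Finset.Icc 1 n, ((-1 : ℝ) ^ (j + 1) * xi (ε h) (n : ℝ) j) • p (n - j))
    (Y : Fin (m + 1) → Polynomial ℝ)
    (S : ℝ → ℝ)
    (hΩ : ∀ x : ℕ, x ≤ M → casdet m ε Y x ≠ 0)
    (PSO : Polynomial ℝ)
    (hPSO : ∀ x : ℝ, S x * casdet m ε Y x = PSO.eval x)
    (PM : Fin (m + 1) → Polynomial ℝ)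
    (hPM : ∀ h : Fin (m + 1), ∀ x : ℝ,
      (∑ j : Fin (m + 1), (-1 : ℝ) ^ ((h : ℕ) + (j : ℕ)) *
          xi (ε h) x (m + 1 - ((j : ℕ) + 1)) * S (x + ((j : ℕ) + 1)) *
          Matrix.det (Matrix.of fun l r : Fin m =>
            xi (ε (h.succAbove l)) (x + ((j : ℕ) + 1) - (((j.succAbove r : Fin (m + 1)) : ℕ) + 1))
                (m + 1 - (((j.succAbove r : Fin (m + 1)) : ℕ) + 1)) *
              (Y (h.succAbove l)).eval
                (x + ((j : ℕ) + 1) - (((j.succAbove r : Fin (m + 1)) : ℕ) + 1)))) =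
        (PM h).eval x)
    (PS : Polynomial ℝ)
    (hPS : ∀ x : ℝ, PS.eval x - PS.eval (x - 1) = PSO.eval x) :
    ∀ n : ℕ, n ≤ M →
      (Polynomial.aeval Dp PS) (qdet m p ε Y n) +
          ∑ h : Fin (m + 1),
            (Polynomial.aeval Dp (PM h)) ((Dop h) ((Polynomial.aeval Dp (Y h)) (qdet m p ε Y n))) =
        PS.eval (n : ℝ) • qdet m p ε Y n := by
  intro n hn
  classical
  have hq := qdet_eq m p ε Y n
  have hcast : ∀ k : ℕ, k ≤ n → ((n - k : ℕ) : ℝ) = (n : ℝ) - k := by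
    intro k hk
    push_cast [Nat.cast_sub hk]
    ring
  have heig : ∀ (Q : Polynomial ℝ) (k : ℕ), k ≤ n →
      (Polynomial.aeval Dp Q) (p (n - k)) = Q.eval ((n : ℝ) - k) • p (n - k) := by
    intro Q k hk
    rw [aeval_eig Dp p hDp Q (n - k), hcast k hk]
  have hT1 : (Polynomial.aeval Dp PS) (qdet m p ε Y n) =
      ∑ k ∈ Finset.range (n + 1),
        (bcoAux m ε Y (n : ℝ) k * PS.eval ((n : ℝ) - k)) • p (n - k) := by
    rw [hq, map_sum]
    refine Finset.sum_congr rfl fun k hk => ?_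
    rw [Finset.mem_range] at hk
    rw [map_smul, heig PS k (by omega), smul_smul]
  have hT2 : ∀ h : Fin (m + 1),
      (Polynomial.aeval Dp (PM h)) ((Dop h) ((Polynomial.aeval Dp (Y h)) (qdet m p ε Y n))) =
      ∑ K ∈ Finset.range (n + 1),
        (∑ c ∈ Finset.range K, bcoAux m ε Y (n : ℝ) c * (Y h).eval ((n : ℝ) - c) *
          ((-1 : ℝ) ^ (K - c + 1) * xi (ε h) ((n : ℝ) - c) (K - c)) *
          (PM h).eval ((n : ℝ) - K)) • p (n - K) := by
    intro h
    have s1 : (Polynomial.aeval Dp (Y h)) (qdet m p ε Y n) =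
        ∑ k ∈ Finset.range (n + 1),
          (bcoAux m ε Y (n : ℝ) k * (Y h).eval ((n : ℝ) - k)) • p (n - k) := by
      rw [hq, map_sum]
      refine Finset.sum_congr rfl fun k hk => ?_
      rw [Finset.mem_range] at hk
      rw [map_smul, heig (Y h) k (by omega), smul_smul]
    rw [s1, map_sum, map_sum]
    have s2 : ∀ k ∈ Finset.range (n + 1),
        (Polynomial.aeval Dp (PM h)) ((Dop h)
          ((bcoAux m ε Y (n : ℝ) k * (Y h).eval ((n : ℝ) - k)) • p (n - k))) =
        ∑ i ∈ Finset.Icc 1 (n - k),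
          (bcoAux m ε Y (n : ℝ) k * (Y h).eval ((n : ℝ) - k) *
            ((-1 : ℝ) ^ (i + 1) * xi (ε h) ((n : ℝ) - k) i) *
            (PM h).eval ((n : ℝ) - ((k + i : ℕ) : ℝ))) • p (n - (k + i)) := by
      intro k hk
      rw [Finset.mem_range] at hk
      rw [map_smul, hDop h (n - k), hcast k (by omega), Finset.smul_sum, map_sum]
      refine Finset.sum_congr rfl fun i hi => ?_
      rw [Finset.mem_Icc] at hi
      rw [show n - k - i = n - (k + i) from by omega]
      rw [map_smul, map_smul, heig (PM h) (k + i) (by omega), smul_smul, smul_smul]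
    rw [Finset.sum_congr rfl s2,
      reindex n (fun k i => (bcoAux m ε Y (n : ℝ) k * (Y h).eval ((n : ℝ) - k) *
        ((-1 : ℝ) ^ (i + 1) * xi (ε h) ((n : ℝ) - k) i) *
        (PM h).eval ((n : ℝ) - ((k + i : ℕ) : ℝ))) • p (n - (k + i)))]
    refine Finset.sum_congr rfl fun K hK => ?_
    rw [Finset.mem_range] at hK
    rw [Finset.sum_smul]
    refine Finset.sum_congr rfl fun c hc => ?_
    rw [Finset.mem_range] at hc
    rw [show c + (K - c) = K from by omega]
  have hR : PS.eval (n : ℝ) • qdet m p ε Y n =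
      ∑ K ∈ Finset.range (n + 1),
        (PS.eval (n : ℝ) * bcoAux m ε Y (n : ℝ) K) • p (n - K) := by
    rw [hq, Finset.smul_sum]
    refine Finset.sum_congr rfl fun K _ => ?_
    rw [smul_smul]
  have hsum2 : ∑ h : Fin (m + 1),
      (Polynomial.aeval Dp (PM h)) ((Dop h) ((Polynomial.aeval Dp (Y h)) (qdet m p ε Y n))) =
      ∑ K ∈ Finset.range (n + 1), ∑ h : Fin (m + 1),
        (∑ c ∈ Finset.range K, bcoAux m ε Y (n : ℝ) c * (Y h).eval ((n : ℝ) - c) *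
          ((-1 : ℝ) ^ (K - c + 1) * xi (ε h) ((n : ℝ) - c) (K - c)) *
          (PM h).eval ((n : ℝ) - K)) • p (n - K) := by
    rw [Finset.sum_congr rfl fun h _ => hT2 h]
    exact Finset.sum_comm
  rw [hT1, hR, hsum2, ← Finset.sum_add_distrib]
  refine Finset.sum_congr rfl fun K hK => ?_
  rw [Finset.mem_range] at hK
  rw [← Finset.sum_smul, ← add_smul]
  congr 1
  rcases Nat.eq_zero_or_pos K with rfl | hKpos
  · simp [mul_comm]
  · have hs := scalar m ε Y S PSO PM PS hPSO (fun h x => hPM h x) hPS (n : ℝ) K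
    have hpull : ∀ h : Fin (m + 1),
        (∑ c ∈ Finset.range K, bcoAux m ε Y (n : ℝ) c * (Y h).eval ((n : ℝ) - c) *
          ((-1 : ℝ) ^ (K - c + 1) * xi (ε h) ((n : ℝ) - c) (K - c)) *
          (PM h).eval ((n : ℝ) - K)) =
        (PM h).eval ((n : ℝ) - K) *
          (∑ c ∈ Finset.range K, bcoAux m ε Y (n : ℝ) c * (Y h).eval ((n : ℝ) - c) *
            ((-1 : ℝ) ^ (K - c + 1) * xi (ε h) ((n : ℝ) - c) (K - c))) := by
      intro h
      rw [← Finset.sum_mul, mul_comm]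
    rw [Finset.sum_congr rfl fun h _ => hpull h]
    linear_combination hs

end
end

section
/- Let m ≥ 1 and let Ψ_1, …, Ψ_m be real polynomials in one variable, not all zero, and set d̃ = max_j deg Ψ_j. Define M(x) = Σ_{j=1}^m (−1)^j Ψ_j(x+j) and, for each integer g ≥ 0, G_g(x) = Σ_{j=1}^m (−1)^j (x−j+1)^g Ψ_j(x); these are polynomials. Let d_0 = deg G_0 and assume that deg G_g ≤ g + d_0 for every integer g with 0 ≤ g ≤ d̃ − d_0. Then M is a polynomial of degree at most d_0. -/
open Polynomial Finset

lemma comp_X_add_C_eq_sum (p : Polynomial ℝ) (c : ℝ) (N : ℕ) (hN : p.natDegree ≤ N) :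
    p.comp (X + C c) = ∑ g ∈ Finset.range (N + 1), c ^ g • Polynomial.hasseDeriv g p := by
  ext n
  rw [← taylor_apply, taylor_coeff, finset_sum_coeff]
  have hb : (hasseDeriv n p).natDegree < N + 1 :=
    lt_of_le_of_lt (le_trans (natDegree_hasseDeriv_le p n) (Nat.sub_le _ _)) (Nat.lt_succ_of_le hN)
  rw [Polynomial.eval_eq_sum_range' hb]
  refine Finset.sum_congr rfl fun g _ => ?_
  rw [coeff_smul, hasseDeriv_coeff, hasseDeriv_coeff, smul_eq_mul]
  rw [Nat.add_comm n g, Nat.choose_symm_add]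
  ring

lemma hasse_degree_le (g : ℕ) (p : Polynomial ℝ) (E : WithBot ℕ)
    (hp : p.degree ≤ (g : WithBot ℕ) + E) : (Polynomial.hasseDeriv g p).degree ≤ E := by
  cases E with
  | bot =>
    have : p = 0 := by
      rw [← Polynomial.degree_eq_bot]
      simpa using hp
    simp [this]
  | coe d =>
    by_cases hp0 : p = 0
    · simp [hp0]
    · have h1 : p.natDegree ≤ g + d := by
        have := Polynomial.natDegree_le_iff_degree_le.mpr (by exact_mod_cast hp)
        exact this
      have h2 : (hasseDeriv g p).natDegree ≤ d := by
        have := Polynomial.natDegree_hasseDeriv_le p g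
        omega
      calc (hasseDeriv g p).degree ≤ ((hasseDeriv g p).natDegree : WithBot ℕ) :=
            Polynomial.degree_le_natDegree
        _ ≤ (d : WithBot ℕ) := by exact_mod_cast h2

lemma C_pow_expand (j : ℝ) (g : ℕ) :
    (C (j + 1) : Polynomial ℝ) ^ g =
      ∑ i ∈ Finset.range (g + 1),
        C ((-1 : ℝ) ^ (i + g) * (g.choose i : ℝ)) * ((X + 1) ^ i * (X - C j) ^ (g - i)) := by
  have h1 : (X + 1 : Polynomial ℝ) - (X - C j) = C (j + 1) := by
    rw [C_add, C_1]; ring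
  rw [← h1, sub_pow]
  refine Finset.sum_congr rfl fun i _ => ?_
  simp only [C_mul, C_pow, map_neg, map_one, map_natCast]
  ring

/-- Degree bound for `M(x) = Σ_j (−1)^j Ψ_j(x+j)`: if the polynomials
`G_g(x) = Σ_j (−1)^j (x−j+1)^g Ψ_j(x)` satisfy `deg G_g ≤ g + deg G_0` for all
`0 ≤ g ≤ d̃ − deg G_0` (where `d̃ = max_j deg Ψ_j`), then `deg M ≤ deg G_0`. -/
theorem degree_M_le (m : ℕ) (hm : 1 ≤ m) (Ψ : Fin m → Polynomial ℝ)
    (hΨ : ∃ j, Ψ j ≠ 0)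
    (dtil : ℕ) (hdtil : dtil = Finset.univ.sup fun j => (Ψ j).natDegree)
    (hG : ∀ g : ℕ,
      ((g : WithBot ℕ) +
          (∑ j : Fin m, (-1 : ℝ) ^ ((j : ℕ) + 1) • Ψ j).degree ≤ (dtil : WithBot ℕ)) →
      (∑ j : Fin m,
          (-1 : ℝ) ^ ((j : ℕ) + 1) • ((Polynomial.X - Polynomial.C ((j : ℝ) + 1) + 1) ^ g * Ψ j)).degree ≤
        (g : WithBot ℕ) + (∑ j : Fin m, (-1 : ℝ) ^ ((j : ℕ) + 1) • Ψ j).degree) :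
    (∑ j : Fin m, (-1 : ℝ) ^ ((j : ℕ) + 1) • (Ψ j).comp (Polynomial.X + Polynomial.C ((j : ℝ) + 1))).degree ≤
      (∑ j : Fin m, (-1 : ℝ) ^ ((j : ℕ) + 1) • Ψ j).degree := by
  have hΨnd : ∀ j : Fin m, (Ψ j).natDegree ≤ dtil := by
    intro j
    rw [hdtil]
    exact Finset.le_sup (f := fun j => (Ψ j).natDegree) (Finset.mem_univ j)
  have hΨdeg : ∀ j : Fin m, (Ψ j).degree ≤ (dtil : WithBot ℕ) := fun j =>
    Polynomial.degree_le_natDegree.trans (by exact_mod_cast hΨnd j)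
  set D := (∑ j : Fin m, (-1 : ℝ) ^ ((j : ℕ) + 1) • Ψ j).degree with hD
  -- the polynomials G i, rewritten with X - C j
  set G : ℕ → Polynomial ℝ := fun i =>
    ∑ j : Fin m, (-1 : ℝ) ^ ((j : ℕ) + 1) • ((X - C (j : ℝ)) ^ i * Ψ j) with hGdef
  have hXC : ∀ j : Fin m, (X : Polynomial ℝ) - C ((j : ℝ) + 1) + 1 = X - C (j : ℝ) := by
    intro j; rw [C_add, C_1]; ring
  have hG' : ∀ i : ℕ, (i : WithBot ℕ) + D ≤ (dtil : WithBot ℕ) →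
      (G i).degree ≤ (i : WithBot ℕ) + D := by
    intro i hi
    have h := hG i hi
    simpa only [hXC, hGdef] using h
  -- the polynomials R g
  set R : ℕ → Polynomial ℝ := fun g =>
    ∑ j : Fin m, ((-1 : ℝ) ^ ((j : ℕ) + 1) * ((j : ℝ) + 1) ^ g) • Ψ j with hRdef
  -- Step 1 : M = ∑ hasseDeriv g (R g)
  have hM : (∑ j : Fin m, (-1 : ℝ) ^ ((j : ℕ) + 1) • (Ψ j).comp (X + C ((j : ℝ) + 1)))
      = ∑ g ∈ Finset.range (dtil + 1), hasseDeriv g (R g) := by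
    calc (∑ j : Fin m, (-1 : ℝ) ^ ((j : ℕ) + 1) • (Ψ j).comp (X + C ((j : ℝ) + 1)))
        = ∑ j : Fin m, ∑ g ∈ Finset.range (dtil + 1),
            ((-1 : ℝ) ^ ((j : ℕ) + 1) * ((j : ℝ) + 1) ^ g) • hasseDeriv g (Ψ j) := by
          refine Finset.sum_congr rfl fun j _ => ?_
          rw [comp_X_add_C_eq_sum (Ψ j) _ dtil (hΨnd j), Finset.smul_sum]
          refine Finset.sum_congr rfl fun g _ => ?_
          rw [smul_smul]
      _ = ∑ g ∈ Finset.range (dtil + 1), ∑ j : Fin m,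
            ((-1 : ℝ) ^ ((j : ℕ) + 1) * ((j : ℝ) + 1) ^ g) • hasseDeriv g (Ψ j) :=
          Finset.sum_comm
      _ = ∑ g ∈ Finset.range (dtil + 1), hasseDeriv g (R g) := by
          refine Finset.sum_congr rfl fun g _ => ?_
          rw [hRdef, map_sum]
          exact Finset.sum_congr rfl fun j _ => (map_smul _ _ _).symm
  -- Step 2 : each term has degree ≤ D
  have key : ∀ g : ℕ, (hasseDeriv g (R g)).degree ≤ D := by
    intro g
    by_cases hcase : (g : WithBot ℕ) + D ≤ (dtil : WithBot ℕ)
    · -- use the expansion of R g in terms of the G i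
      refine hasse_degree_le g _ D ?_
      have hRG : R g = ∑ i ∈ Finset.range (g + 1),
          ((-1 : ℝ) ^ (i + g) * (g.choose i : ℝ)) • ((X + 1) ^ i * G (g - i)) := by
        calc R g = ∑ j : Fin m, ∑ i ∈ Finset.range (g + 1),
              ((-1 : ℝ) ^ (i + g) * (g.choose i : ℝ)) •
                ((X + 1) ^ i * ((-1 : ℝ) ^ ((j : ℕ) + 1) • ((X - C (j : ℝ)) ^ (g - i) * Ψ j))) := by
                refine Finset.sum_congr rfl fun j _ => ?_
                simp only [smul_eq_C_mul, C_mul, C_pow]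
                rw [C_pow_expand (j : ℝ) g, Finset.mul_sum, Finset.sum_mul]
                refine Finset.sum_congr rfl fun i _ => ?_
                simp only [C_mul, C_pow, map_neg, map_one]
                ring
          _ = ∑ i ∈ Finset.range (g + 1),
              ((-1 : ℝ) ^ (i + g) * (g.choose i : ℝ)) • ((X + 1) ^ i * G (g - i)) := by
                rw [Finset.sum_comm]
                refine Finset.sum_congr rfl fun i _ => ?_
                rw [hGdef, Finset.mul_sum, Finset.smul_sum]
      rw [hRG]
      refine (Polynomial.degree_sum_le _ _).trans (Finset.sup_le fun i hi => ?_)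
      have hile : i ≤ g := Nat.lt_succ_iff.mp (Finset.mem_range.mp hi)
      have hGi : (G (g - i)).degree ≤ ((g - i : ℕ) : WithBot ℕ) + D := by
        refine hG' (g - i) (le_trans ?_ hcase)
        exact add_le_add (by exact_mod_cast Nat.sub_le g i) (le_refl D)
      calc (((-1 : ℝ) ^ (i + g) * (g.choose i : ℝ)) • ((X + 1) ^ i * G (g - i))).degree
          ≤ ((X + 1) ^ i * G (g - i)).degree := Polynomial.degree_smul_le _ _
        _ ≤ ((X + 1 : Polynomial ℝ) ^ i).degree + (G (g - i)).degree :=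
            Polynomial.degree_mul_le _ _
        _ ≤ (i : WithBot ℕ) + (((g - i : ℕ) : WithBot ℕ) + D) := by
            refine add_le_add ?_ hGi
            calc ((X + 1 : Polynomial ℝ) ^ i).degree ≤ i • (X + 1 : Polynomial ℝ).degree :=
                Polynomial.degree_pow_le _ _
              _ ≤ (i : WithBot ℕ) := by
                  have h11 : ((X : Polynomial ℝ) + 1) = X + C 1 := by rw [C_1]
                  rw [h11, Polynomial.degree_X_add_C (1:ℝ)]
                  simp
        _ = (g : WithBot ℕ) + D := by
            rw [← add_assoc]
            congr 1
            rw [← Nat.cast_add]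
            congr 1
            omega
    · -- trivial bound : deg R g ≤ dtil and dtil < g + D
      have hRg : (R g).degree ≤ (dtil : WithBot ℕ) := by
        rw [hRdef]
        refine (Polynomial.degree_sum_le _ _).trans (Finset.sup_le fun j _ => ?_)
        exact (Polynomial.degree_smul_le _ _).trans (hΨdeg j)
      cases hDd : D with
      | bot =>
        exfalso
        apply hcase
        rw [hDd]
        simp
      | coe d =>
        by_cases hR0 : R g = 0
        · simp [hR0]
        · have h1 : (R g).natDegree ≤ dtil := Polynomial.natDegree_le_iff_degree_le.mpr hRg
          have h2 : dtil < g + d := by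
            by_contra hle
            push_neg at hle
            apply hcase
            have hDd' : D = ((d : ℕ) : WithBot ℕ) := hDd
            rw [hDd']
            exact_mod_cast hle
          have h3 : (hasseDeriv g (R g)).natDegree ≤ d := by
            have := Polynomial.natDegree_hasseDeriv_le (R g) g
            omega
          calc (hasseDeriv g (R g)).degree ≤ ((hasseDeriv g (R g)).natDegree : WithBot ℕ) :=
              Polynomial.degree_le_natDegree
            _ ≤ (d : WithBot ℕ) := by exact_mod_cast h3
  rw [hM]
  exact (Polynomial.degree_sum_le _ _).trans (Finset.sup_le fun g _ => key g)
end

section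
/- Let α, β, N be real numbers with α ∉ {−1,−2,−3,…}, and write λ(x) = x(x+α+β+1) and R_n = R_n^{α,β,N}. Then for every integer n ≥ 0 and every real x with (2x+α+β)(2x+α+β+1)(2x+α+β+2) ≠ 0: −((x+α+1)(x+α+β+1)/((2x+α+β+1)(2x+α+β+2))) · (R_n(λ(x+1)) − R_n(λ(x))) + (x(x+β)/((2x+α+β)(2x+α+β+1))) · (R_n(λ(x)) − R_n(λ(x−1))) = − Σ_{j=1}^n R_{n−j}(λ(x)). (This says that the sequence ε_n = −1 defines a D-operator D_1 for the dual Hahn polynomials, the displayed difference operator.) -/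
open Polynomial Finset

noncomputable section

/-- Pochhammer symbol `(a)_k = a(a+1)⋯(a+k−1)`. -/
def poch (a : ℝ) (k : ℕ) : ℝ := ∏ i ∈ Finset.range k, (a + i)

/-- The quadratic lattice `λ^{α,β}(x) = x(x+α+β+1)`. -/
def lam (α β x : ℝ) : ℝ := x * (x + α + β + 1)

/-- The dual Hahn polynomial `R_n^{α,β,N}`. -/
def dualHahn (α β N : ℝ) (n : ℕ) : Polynomial ℝ :=
  Polynomial.C ((n.factorial : ℝ))⁻¹ *
    ∑ j ∈ Finset.range (n + 1),
      Polynomial.C ((-1 : ℝ) ^ j * poch (-(n : ℝ)) j * poch (-N + j) (n - j)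
          / (poch (α + 1) j * (j.factorial : ℝ))) *
        ∏ i ∈ Finset.range j, (Polynomial.X - Polynomial.C ((i : ℝ) * (α + β + 1 + i)))

/-- Dual Hahn polynomial with integer index; `R_k = 0` for `k < 0`. -/
def dualHahnZ (α β N : ℝ) (k : ℤ) : Polynomial ℝ :=
  if 0 ≤ k then dualHahn α β N k.toNat else 0

/-- The Hahn polynomial `h_n^{α,β,N}` evaluated at `x`. -/
def hahn (α β N : ℝ) (n : ℕ) (x : ℝ) : ℝ :=
  ∑ j ∈ Finset.range (n + 1),
    poch (-(n : ℝ)) j * poch ((n : ℝ) + α + β + 1) j * poch (-N + j) (n - j) *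
      poch (α + j + 1) (n - j) * poch (-x) j / (j.factorial : ℝ)

/-- The dual Hahn weight `w_{*;α,β,N}(x)`. -/
def dualHahnWeight (α β : ℝ) (N : ℕ) (x : ℕ) : ℝ :=
  (2 * (x : ℝ) + α + β + 1) * poch (α + 1) x * poch (-(N : ℝ)) x * (N.factorial : ℝ) /
    ((-1 : ℝ) ^ x * poch ((x : ℝ) + α + β + 1) (N + 1) * poch (β + 1) x * (x.factorial : ℝ))

namespace DH
def dsc (a : ℝ) (j : ℕ) : ℝ := ∏ i ∈ Finset.range j, (a - i)

lemma poch_succ (a : ℝ) (k : ℕ) : poch a (k+1) = poch a k * (a + k) :=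
  Finset.prod_range_succ _ _

lemma poch_succ' (a : ℝ) (k : ℕ) : poch a (k+1) = a * poch (a+1) k := by
  rw [poch, Finset.prod_range_succ']
  simp only [Nat.cast_zero, add_zero, mul_comm]
  congr 1
  · exact Finset.prod_congr rfl fun i _ => by push_cast; ring
lemma dsc_succ (a : ℝ) (k : ℕ) : dsc a (k+1) = dsc a k * (a - k) :=
  Finset.prod_range_succ _ _
lemma dsc_succ' (a : ℝ) (k : ℕ) : dsc a (k+1) = a * dsc (a-1) k := by
  rw [dsc, Finset.prod_range_succ']
  simp only [Nat.cast_zero, sub_zero, mul_comm]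
  congr 1
  · exact Finset.prod_congr rfl fun i _ => by push_cast; ring

/-- b_j(y) = ∏_{i<j} (λ(y) − i(α+β+1+i)) -/
def bjf (α β : ℝ) (j : ℕ) (y : ℝ) : ℝ :=
  ∏ i ∈ Finset.range j, (lam α β y - (i:ℝ)*(α+β+1+i))

lemma bjf_eq (α β : ℝ) (j : ℕ) (y : ℝ) :
    bjf α β j y = dsc y j * poch (y+α+β+1) j := by
  rw [bjf, dsc, poch, ← Finset.prod_mul_distrib]
  exact Finset.prod_congr rfl fun i _ => by rw [lam]; ring

def pf (α β : ℝ) (j : ℕ) (x : ℝ) : ℝ := dsc x j * poch (x+α+β+2) j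
def qf (α β : ℝ) (j : ℕ) (x : ℝ) : ℝ := dsc (x-1) j * poch (x+α+β+1) j

lemma E1 (α β : ℝ) (j : ℕ) (x : ℝ) :
    (x+α+β+1) * pf α β j x = (x+α+β+1+j) * bjf α β j x := by
  rw [pf, bjf_eq]
  have h1 : (x+α+β+1) * poch (x+α+β+2) j = poch (x+α+β+1) (j+1) := by
    rw [poch_succ', show x+α+β+1+1 = x+α+β+2 by ring]
  have h2 : poch (x+α+β+1) (j+1) = poch (x+α+β+1) j * (x+α+β+1+j) :=
    poch_succ _ _
  linear_combination dsc x j * h1 + dsc x j * h2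

lemma E2 (α β : ℝ) (j : ℕ) (x : ℝ) :
    x * qf α β j x = (x - j) * bjf α β j x := by
  rw [qf, bjf_eq]
  have h1 : x * dsc (x-1) j = dsc x (j+1) := (dsc_succ' x j).symm
  have h2 : dsc x (j+1) = dsc x j * (x - j) := dsc_succ x j
  linear_combination poch (x+α+β+1) j * h1 + poch (x+α+β+1) j * h2

lemma E3 (α β : ℝ) (j : ℕ) (x : ℝ) :
    bjf α β (j+1) x = (x - j) * (x+α+β+1) * pf α β j x := by
  rw [bjf_eq, pf, dsc_succ]
  have h1 : poch (x+α+β+1) (j+1) = (x+α+β+1) * poch (x+α+β+2) j := by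
    rw [poch_succ', show x+α+β+1+1 = x+α+β+2 by ring]
  rw [h1]; ring

lemma bjf_succ (α β : ℝ) (j : ℕ) (y : ℝ) :
    bjf α β (j+1) y = bjf α β j y * ((y - j) * (y+α+β+1+j)) := by
  rw [bjf, bjf, Finset.prod_range_succ]
  congr 1
  rw [lam]; push_cast; ring

lemma L1 (α β : ℝ) (j : ℕ) (x : ℝ) :
    bjf α β (j+1) (x+1) - bjf α β (j+1) x
      = ((j:ℝ)+1) * (2*x+α+β+2) * pf α β j x := by
  induction j with
  | zero =>
    have e : ∀ y:ℝ, bjf α β 1 y = lam α β y := by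
      intro y; rw [bjf, Finset.prod_range_one]; norm_num
    simp only [e, pf, dsc, poch, lam, Finset.prod_range_zero, Nat.cast_zero]
    ring
  | succ j ih =>
    have hb1 : bjf α β (j+2) (x+1) = bjf α β (j+1) (x+1) * ((x - j) * (x+α+β+3+j)) := by
      rw [bjf_succ]; push_cast; ring_nf
    have hb2 : bjf α β (j+2) x = bjf α β (j+1) x * ((x - 1 - j) * (x+α+β+2+j)) := by
      rw [bjf_succ]; push_cast; ring_nf
    have hE3 := E3 α β j x
    have hpf : pf α β (j+1) x = pf α β j x * ((x - j) * (x+α+β+2+j)) := by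
      rw [pf, pf, dsc_succ, poch_succ]; ring
    have hx1 : bjf α β (j+1) (x+1) = bjf α β (j+1) x + ((j:ℝ)+1)*(2*x+α+β+2)*pf α β j x := by
      linarith [ih]
    rw [hb1, hb2, hx1, hpf, hE3]
    push_cast
    ring

lemma L2 (α β : ℝ) (j : ℕ) (x : ℝ) :
    bjf α β (j+1) x - bjf α β (j+1) (x-1)
      = ((j:ℝ)+1) * (2*x+α+β) * qf α β j x := by
  have h := L1 α β j (x-1)
  rw [show x - 1 + 1 = x by ring] at h
  rw [h, qf, pf, show x-1+α+β+2 = x+α+β+1 by ring]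
  ring

lemma star (α β : ℝ) (j : ℕ) (x : ℝ) :
    -((x+α+1)*(x+α+β+1)) * pf α β j x + (x*(x+β)) * qf α β j x
      = -((α+(j:ℝ)+1) * (2*x+α+β+1)) * bjf α β j x := by
  have h1 := E1 α β j x
  have h2 := E2 α β j x
  linear_combination (-(x+α+1)) * h1 + (x+β) * h2

set_option maxRecDepth 8000 in
set_option maxHeartbeats 1000000 in
lemma KEY (α β : ℝ) (j : ℕ) (x : ℝ)
    (hd0 : 2*x+α+β ≠ 0) (hd1 : 2*x+α+β+1 ≠ 0) (hd2 : 2*x+α+β+2 ≠ 0) :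
    -((x + α + 1) * (x + α + β + 1) / ((2 * x + α + β + 1) * (2 * x + α + β + 2))) *
        (bjf α β (j+1) (x+1) - bjf α β (j+1) x) +
      (x * (x + β) / ((2 * x + α + β) * (2 * x + α + β + 1))) *
        (bjf α β (j+1) x - bjf α β (j+1) (x-1))
      = -(((j:ℝ)+1) * (α+(j:ℝ)+1)) * bjf α β j x := by
  rw [L1, L2]
  have hs := star α β j x
  set P := pf α β j x with hP
  set Q := qf α β j x with hQ
  set B := bjf α β j x with hB
  set d := 2*x+α+β with hd
  clear_value P Q B d
  have e1 : -((x+α+1)*(x+α+β+1) / ((d+1)*(d+2))) * (((j:ℝ)+1)*(d+2)*P)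
      = (((j:ℝ)+1) * (-((x+α+1)*(x+α+β+1)*P))) / (d+1) := by
    field_simp
  have e2 : (x*(x+β) / (d*(d+1))) * (((j:ℝ)+1)*d*Q)
      = (((j:ℝ)+1) * (x*(x+β)*Q)) / (d+1) := by
    field_simp
  rw [e1, e2, ← add_div, ← mul_add]
  have hs2 : -((x+α+1)*(x+α+β+1)*P) + x*(x+β)*Q = -((α+(j:ℝ)+1)*(d+1))*B := by
    linear_combination hs
  rw [hs2, div_eq_iff hd1]
  ring

lemma poch_ne (α : ℝ) (hα : ∀ k : ℕ, α ≠ -1 - k) (j : ℕ) : poch (α+1) j ≠ 0 := by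
  rw [poch]
  refine Finset.prod_ne_zero_iff.2 fun i _ => ?_
  intro h
  exact hα i (by linarith)

lemma poch_neg_nat (n : ℕ) : ∀ j ≤ n, poch (-(n:ℝ)) j * ((n-j).factorial : ℝ)
    = (-1:ℝ)^j * (n.factorial : ℝ) := by
  intro j
  induction j with
  | zero => intro _; simp [poch]
  | succ j ih =>
    intro h
    have hj : j ≤ n := by omega
    have hcast : ((n - j : ℕ) : ℝ) = (n:ℝ) - j := by
      rw [Nat.cast_sub hj]
    have hfac : ((n - j).factorial : ℝ) = ((n - j : ℕ):ℝ) * ((n - (j+1)).factorial : ℝ) := by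
      have h1 : n - j = (n - (j+1)) + 1 := by omega
      rw [h1, Nat.factorial_succ]
      push_cast
      ring
    have hkey := ih hj
    rw [poch_succ]
    have hne : ((n:ℝ) - j) ≠ 0 := by
      have hlt : (j:ℝ) < n := by exact_mod_cast (by omega : j < n)
      intro hc; linarith
    have : poch (-(n:ℝ)) j = (-1:ℝ)^j * (n.factorial : ℝ) / ((n-j).factorial : ℝ) := by
      rw [eq_div_iff (by exact_mod_cast (n-j).factorial_ne_zero)]
      exact hkey
    rw [this, hfac, hcast, pow_succ]
    field_simp
    ring

lemma poch_sum (a : ℝ) : ∀ L : ℕ, ∑ t ∈ Finset.range (L+1), poch a t / (t.factorial:ℝ)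
    = poch (a+1) L / (L.factorial:ℝ) := by
  intro L
  induction L with
  | zero => simp [poch]
  | succ L ih =>
    rw [Finset.sum_range_succ, ih, poch_succ' a L, poch_succ (a+1) L, Nat.factorial_succ]
    have hf : ((L+1).factorial : ℝ) ≠ 0 := by exact_mod_cast (L+1).factorial_ne_zero
    have hf2 : ((L.factorial : ℝ)) ≠ 0 := by exact_mod_cast L.factorial_ne_zero
    rw [Nat.factorial_succ] at hf
    push_cast at hf ⊢
    field_simp
    ring

lemma sum_tri (f : ℕ → ℕ → ℝ) : ∀ n : ℕ, ∑ k ∈ Finset.range n, ∑ j ∈ Finset.range (k+1), f j k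
    = ∑ j ∈ Finset.range n, ∑ k ∈ Finset.Ico j n, f j k := by
  intro n
  induction n with
  | zero => simp
  | succ n ih =>
    rw [Finset.sum_range_succ, ih]
    have h1 : ∀ j ∈ Finset.range (n+1), ∑ k ∈ Finset.Ico j (n+1), f j k
        = (∑ k ∈ Finset.Ico j n, f j k) + f j n := by
      intro j hj
      exact Finset.sum_Ico_succ_top (Finset.mem_range_succ_iff.mp hj) _
    rw [Finset.sum_congr rfl h1, Finset.sum_add_distrib, Finset.sum_range_succ (fun j => ∑ k ∈ Finset.Ico j n, f j k)]
    simp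

def cf (α N : ℝ) (n j : ℕ) : ℝ :=
  (-1:ℝ)^j * poch (-(n:ℝ)) j * poch (-N + j) (n - j) / (poch (α+1) j * (j.factorial : ℝ))

lemma eval_dualHahn (α β N : ℝ) (n : ℕ) (x : ℝ) :
    (dualHahn α β N n).eval (lam α β x)
      = (n.factorial : ℝ)⁻¹ * ∑ j ∈ Finset.range (n+1), cf α N n j * bjf α β j x := by
  rw [dualHahn]
  simp only [eval_mul, eval_C, eval_finset_sum, eval_prod, eval_sub, eval_X, cf, bjf]

lemma term_eq (α N : ℝ) (j k : ℕ) (hP : poch (α+1) j ≠ 0) (hjk : j ≤ k) :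
    ((k.factorial:ℝ))⁻¹ * cf α N k j
      = (poch (α+1) j * (j.factorial:ℝ))⁻¹ * (poch (-N + j) (k - j) / ((k-j).factorial:ℝ)) := by
  have hpn := poch_neg_nat k j hjk
  rw [cf]
  have hk : ((k.factorial:ℝ)) ≠ 0 := by exact_mod_cast k.factorial_ne_zero
  have hkj : (((k-j).factorial:ℝ)) ≠ 0 := by exact_mod_cast (k-j).factorial_ne_zero
  have hj : ((j.factorial:ℝ)) ≠ 0 := by exact_mod_cast j.factorial_ne_zero
  have he : (-1:ℝ)^j * (-1:ℝ)^j = 1 := by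
    rw [← pow_add]; exact Even.neg_one_pow ⟨j, rfl⟩
  field_simp
  linear_combination (poch (-N + j) (k - j) * (-1:ℝ)^j) * hpn
    + (poch (-N + (j:ℝ)) (k - j) * (k.factorial:ℝ)) * he

lemma scal (α N : ℝ) (hα : ∀ k : ℕ, α ≠ -1 - k) (n j : ℕ) (hj : j < n) :
    (n.factorial:ℝ)⁻¹ * cf α N n (j+1) * (-(((j:ℝ)+1) * (α+(j:ℝ)+1)))
      = -∑ k ∈ Finset.Ico j n, (k.factorial:ℝ)⁻¹ * cf α N k j := by
  have hP : poch (α+1) j ≠ 0 := poch_ne α hα j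
  have hsum : ∑ k ∈ Finset.Ico j n, (k.factorial:ℝ)⁻¹ * cf α N k j
      = (poch (α+1) j * (j.factorial:ℝ))⁻¹ *
        ∑ t ∈ Finset.range (n - j), poch (-N + j) t / (t.factorial:ℝ) := by
    rw [Finset.sum_congr rfl (fun k hk => term_eq α N j k hP (Finset.mem_Ico.mp hk).1),
      Finset.sum_Ico_eq_sum_range, Finset.mul_sum]
    exact Finset.sum_congr rfl fun t _ => by rw [Nat.add_sub_cancel_left]
  have hL : n - j = (n - 1 - j) + 1 := by omega
  rw [hsum, hL, poch_sum]
  -- now expand the LHS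
  have hpn := poch_neg_nat n (j+1) (by omega)
  have hnj : n - (j+1) = n - 1 - j := by omega
  rw [hnj] at hpn
  rw [cf, poch_succ (α+1) j]
  have hfacj : (((j+1).factorial : ℝ)) = ((j:ℝ)+1) * (j.factorial:ℝ) := by
    rw [Nat.factorial_succ]; push_cast; ring
  have hcc : poch (-N + ((j:ℕ)+1 : ℕ)) (n - (j+1)) = poch (-N + (j:ℝ) + 1) (n-1-j) := by
    rw [hnj]; push_cast; ring_nf
  rw [hcc, hfacj]
  have hαj : (α + 1 + (j:ℝ)) ≠ 0 := by
    intro hc; exact hα j (by linarith)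
  have hn : ((n.factorial:ℝ)) ≠ 0 := by exact_mod_cast n.factorial_ne_zero
  have hj1 : ((j:ℝ)+1) ≠ 0 := by positivity
  have hjf : ((j.factorial:ℝ)) ≠ 0 := by exact_mod_cast j.factorial_ne_zero
  have hnjf : (((n-1-j).factorial:ℝ)) ≠ 0 := by exact_mod_cast (n-1-j).factorial_ne_zero
  have hpn' : poch (-(n:ℝ)) (j+1) = ((-1:ℝ)^(j+1)) * (n.factorial:ℝ) / ((n-1-j).factorial:ℝ) := by
    rw [eq_div_iff hnjf]; exact hpn
  rw [hpn']
  have he : (-1:ℝ)^j * (-1:ℝ)^j = 1 := by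
    rw [← pow_add]; exact Even.neg_one_pow ⟨j, rfl⟩
  simp only [pow_succ]
  field_simp
  have hs2 : (-1:ℝ)^(j*2) = 1 := by rw [mul_comm, pow_mul]; norm_num
  ring_nf
  rw [hs2]
  ring

lemma comb (s : Finset ℕ) (c A C : ℝ) (d f g h : ℕ → ℝ) :
    -A * (c * ∑ j ∈ s, d j * f j - c * ∑ j ∈ s, d j * g j)
        + C * (c * ∑ j ∈ s, d j * g j - c * ∑ j ∈ s, d j * h j)
      = ∑ j ∈ s, c * d j * (-A * (f j - g j) + C * (g j - h j)) := by
  simp only [Finset.mul_sum, ← Finset.sum_sub_distrib, ← Finset.sum_add_distrib]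
  exact Finset.sum_congr rfl fun j _ => by ring

end DH

/-- The sequence `ε_n = −1` defines a `𝒟`-operator for the dual Hahn polynomials:
the displayed first-order difference operator acts as the lowering operator
`R_n ↦ −Σ_{j=1}^n R_{n−j}`. -/
theorem dualHahn_Doperator_one (α β N : ℝ) (hα : ∀ k : ℕ, α ≠ -1 - k)
    (n : ℕ) (x : ℝ)
    (hx : (2 * x + α + β) * (2 * x + α + β + 1) * (2 * x + α + β + 2) ≠ 0) :
    -((x + α + 1) * (x + α + β + 1) / ((2 * x + α + β + 1) * (2 * x + α + β + 2))) *
        ((dualHahn α β N n).eval (lam α β (x + 1)) - (dualHahn α β N n).eval (lam α β x)) +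
      (x * (x + β) / ((2 * x + α + β) * (2 * x + α + β + 1))) *
        ((dualHahn α β N n).eval (lam α β x) - (dualHahn α β N n).eval (lam α β (x - 1))) =
    -∑ j ∈ Finset.Icc 1 n, (dualHahn α β N (n - j)).eval (lam α β x) := by
  classical
  have hd0 : 2 * x + α + β ≠ 0 := fun h => hx (by rw [h, zero_mul, zero_mul])
  have hd1 : 2 * x + α + β + 1 ≠ 0 := fun h => hx (by rw [h, mul_zero, zero_mul])
  have hd2 : 2 * x + α + β + 2 ≠ 0 := fun h => hx (by rw [h, mul_zero])
  have hIcc : ∑ j ∈ Finset.Icc 1 n, (dualHahn α β N (n - j)).eval (lam α β x)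
      = ∑ k ∈ Finset.range n, (dualHahn α β N k).eval (lam α β x) := by
    rw [← Finset.Ico_add_one_right_eq_Icc, Finset.sum_Ico_eq_sum_range,
      show n + 1 - 1 = n from rfl]
    have hc : ∀ i ∈ Finset.range n, (dualHahn α β N (n - (1+i))).eval (lam α β x)
        = (dualHahn α β N (n-1-i)).eval (lam α β x) := fun i _ => by rw [Nat.sub_sub]
    rw [Finset.sum_congr rfl hc]
    exact Finset.sum_range_reflect (fun k => (dualHahn α β N k).eval (lam α β x)) n
  rw [hIcc]
  rw [DH.eval_dualHahn α β N n (x+1), DH.eval_dualHahn α β N n x,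
    DH.eval_dualHahn α β N n (x-1)]
  rw [DH.comb]
  rw [Finset.sum_range_succ']
  have h0 : (n.factorial:ℝ)⁻¹ * DH.cf α N n 0 *
      (-((x + α + 1) * (x + α + β + 1) / ((2 * x + α + β + 1) * (2 * x + α + β + 2))) *
        (DH.bjf α β 0 (x+1) - DH.bjf α β 0 x) +
       x * (x + β) / ((2 * x + α + β) * (2 * x + α + β + 1)) *
        (DH.bjf α β 0 x - DH.bjf α β 0 (x-1))) = 0 := by
    simp [DH.bjf]
  rw [h0, add_zero]
  have hterm : ∀ j ∈ Finset.range n,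
      (n.factorial:ℝ)⁻¹ * DH.cf α N n (j+1) *
      (-((x + α + 1) * (x + α + β + 1) / ((2 * x + α + β + 1) * (2 * x + α + β + 2))) *
        (DH.bjf α β (j+1) (x+1) - DH.bjf α β (j+1) x) +
       x * (x + β) / ((2 * x + α + β) * (2 * x + α + β + 1)) *
        (DH.bjf α β (j+1) x - DH.bjf α β (j+1) (x-1)))
      = (n.factorial:ℝ)⁻¹ * DH.cf α N n (j+1) *
        (-(((j:ℝ)+1) * (α+(j:ℝ)+1)) * DH.bjf α β j x) := by
    intro j _
    rw [DH.KEY α β j x hd0 hd1 hd2]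
  rw [Finset.sum_congr rfl hterm]
  -- now the right-hand side
  have hR : ∑ k ∈ Finset.range n, (dualHahn α β N k).eval (lam α β x)
      = ∑ j ∈ Finset.range n,
          (∑ k ∈ Finset.Ico j n, (k.factorial:ℝ)⁻¹ * DH.cf α N k j) * DH.bjf α β j x := by
    rw [Finset.sum_congr rfl (fun k _ => DH.eval_dualHahn α β N k x)]
    have : ∀ k ∈ Finset.range n, (k.factorial:ℝ)⁻¹ *
        ∑ j ∈ Finset.range (k+1), DH.cf α N k j * DH.bjf α β j x
        = ∑ j ∈ Finset.range (k+1), (k.factorial:ℝ)⁻¹ * DH.cf α N k j * DH.bjf α β j x := by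
      intro k _
      rw [Finset.mul_sum]
      exact Finset.sum_congr rfl fun j _ => by ring
    rw [Finset.sum_congr rfl this,
      DH.sum_tri (fun j k => (k.factorial:ℝ)⁻¹ * DH.cf α N k j * DH.bjf α β j x) n]
    exact Finset.sum_congr rfl fun j _ => (Finset.sum_mul _ _ _).symm
  rw [hR, ← Finset.sum_neg_distrib]
  refine Finset.sum_congr rfl fun j hj => ?_
  have hs := DH.scal α N hα n j (Finset.mem_range.mp hj)
  linear_combination (DH.bjf α β j x) * hs

end
end

section
/- Let α, β, N be real numbers with α ∉ {−1,−2,−3,…}, and write λ(x) = x(x+α+β+1) and R_n = R_n^{α,β,N}. Then for every integer n ≥ 0 and every real x with (2x+α+β)(2x+α+β+1)(2x+α+β+2) ≠ 0: ((x+α+β+1)(N−x)/((2x+α+β+1)(2x+α+β+2))) · (R_n(λ(x+1)) − R_n(λ(x))) + (x(x+α+β+N+1)/((2x+α+β)(2x+α+β+1))) · (R_n(λ(x)) − R_n(λ(x−1))) = Σ_{j=1}^n (−1)^{j+1} ((N−n+1)_j/(α+n−j+1)_j) R_{n−j}(λ(x)). (This says that the sequence ε_n = (N−n+1)/(α+n)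 defines a D-operator D_3 for the dual Hahn polynomials, the displayed difference operator.) -/
open Polynomial Finset

noncomputable section

/-! ### Auxiliary lemmas -/

lemma poch_succ (a : ℝ) (k : ℕ) : poch a (k+1) = poch a k * (a + k) := by
  simp [poch, Finset.prod_range_succ]

lemma poch_succ' (a : ℝ) (k : ℕ) : poch a (k+1) = a * poch (a+1) k := by
  rw [poch, Finset.prod_range_succ', poch]
  simp only [Nat.cast_zero, add_zero, mul_comm]
  congr 1
  exact Finset.prod_congr rfl (fun i _ => by push_cast; ring)

lemma poch_add (a : ℝ) (p q : ℕ) : poch a (p+q) = poch a p * poch (a + p) q := by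
  rw [poch, Finset.prod_range_add, poch, poch]
  congr 1
  exact Finset.prod_congr rfl (fun i _ => by push_cast; ring)

lemma poch_reflect (a : ℝ) (m : ℕ) : poch (-a - m + 1) m = (-1)^m * poch a m := by
  induction m generalizing a with
  | zero => simp [poch]
  | succ m ih =>
      have h1 : (-a - ((m+1:ℕ):ℝ) + 1) = -a - m := by push_cast; ring
      rw [h1, poch_succ', show (-a - (m:ℝ) + 1) = -a - m + 1 from rfl]
      rw [ih, poch_succ]
      ring

lemma poch_cast_zero (n k : ℕ) (h : n < k) : poch (-(n:ℝ)) k = 0 := by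
  apply Finset.prod_eq_zero (Finset.mem_range.mpr h)
  simp

lemma poch_factorial (n k : ℕ) (h : k ≤ n) :
    poch (-(n:ℝ)) k * ((n-k).factorial : ℝ) = (-1)^k * (n.factorial : ℝ) := by
  induction k with
  | zero => simp [poch]
  | succ k ih =>
      have hk : k ≤ n := Nat.le_of_succ_le h
      have ih' := ih hk
      have hne : ((n - k : ℕ) : ℝ) ≠ 0 := by
        have : 0 < n - k := by omega
        exact_mod_cast this.ne'
      apply mul_left_cancel₀ hne
      rw [poch_succ]
      have hfac : ((n-k).factorial : ℝ) = ((n-k:ℕ):ℝ) * ((n-(k+1)).factorial : ℝ) := by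
        have : n - k = (n - (k+1)) + 1 := by omega
        rw [this, Nat.factorial_succ]; push_cast [← this]; ring
      have hc : ((n-k:ℕ):ℝ) = (n:ℝ) - k := by push_cast [Nat.cast_sub hk]; ring
      rw [hc] at hfac ⊢
      linear_combination ((-(n:ℝ)+k)) * ih' - (poch (-(n:ℝ)) k * (-(n:ℝ)+k)) * hfac

lemma poch_ne_zero (a : ℝ) (k : ℕ) (h : ∀ i : ℕ, a + i ≠ 0) : poch a k ≠ 0 :=
  Finset.prod_ne_zero_iff.mpr (fun i _ => h i)

/-! ### The factored lattice products -/

def gg (s : ℝ) (j : ℕ) (x : ℝ) : ℝ := ∏ i ∈ Finset.range j, ((x - i) * (x + s + 1 + i))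
def gp (s : ℝ) (j : ℕ) (x : ℝ) : ℝ := ∏ i ∈ Finset.range j, ((x - i) * (x + s + 2 + i))

lemma gg_succ (s : ℝ) (j : ℕ) (x : ℝ) :
    gg s (j+1) x = gg s j x * ((x - j) * (x + s + 1 + j)) := by
  simp [gg, Finset.prod_range_succ]

lemma gp_succ (s : ℝ) (j : ℕ) (x : ℝ) :
    gp s (j+1) x = gp s j x * ((x - j) * (x + s + 2 + j)) := by
  simp [gp, Finset.prod_range_succ]

lemma gg_eq_gp (s : ℝ) (j : ℕ) (x : ℝ) :
    gg s (j+1) x = (x - j) * (x + s + 1) * gp s j x := by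
  induction j with
  | zero => simp [gg, gp, Finset.prod_range_one]
  | succ j ih =>
      rw [gg_succ, gp_succ, ih]
      push_cast
      ring

lemma gp_back (s : ℝ) (j : ℕ) (x : ℝ) :
    x * gp s j (x-1) = (x - j) * gg s j x := by
  induction j with
  | zero => simp [gg, gp]
  | succ j ih =>
      rw [gg_succ, gp_succ]
      push_cast
      linear_combination ((x-1-(j:ℝ))*(x+s+1+(j:ℝ)))*ih

lemma diff_forward (s : ℝ) (j : ℕ) (x : ℝ) :
    gg s (j+1) (x+1) - gg s (j+1) x = ((j:ℝ)+1) * (2*x + s + 2) * gp s j x := by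
  induction j generalizing x with
  | zero => simp [gg, gp, Finset.prod_range_one]; ring
  | succ j ih =>
      have ih' := ih x
      have h1 := gg_eq_gp s j x
      have A := gg_succ s (j+1) (x+1)
      have B := gg_succ s (j+1) x
      have C := gp_succ s j x
      push_cast at A B C ⊢
      linear_combination A - B + ((x+1-((j:ℝ)+1))*(x+1+s+1+((j:ℝ)+1)))*ih' +
        (2*x+s+2)*h1 - (((j:ℝ)+2)*(2*x+s+2))*C

lemma gp_rel (s : ℝ) (j : ℕ) (x : ℝ) :
    (x + s + 1) * gp s j x = (x + s + 1 + j) * gg s j x := by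
  induction j with
  | zero => simp [gg, gp]
  | succ j ih =>
      rw [gg_succ, gp_succ]
      push_cast
      linear_combination ((x-(j:ℝ))*(x+s+2+(j:ℝ)))*ih

set_option maxHeartbeats 1000000 in
lemma op_g (α β N : ℝ) (j : ℕ) (x : ℝ)
    (hx : (2 * x + α + β) * (2 * x + α + β + 1) * (2 * x + α + β + 2) ≠ 0) :
    ((x + α + β + 1) * (N - x) / ((2 * x + α + β + 1) * (2 * x + α + β + 2))) *
        (gg (α+β) (j+1) (x+1) - gg (α+β) (j+1) x) +
      (x * (x + α + β + N + 1) / ((2 * x + α + β) * (2 * x + α + β + 1))) *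
        (gg (α+β) (j+1) x - gg (α+β) (j+1) (x-1)) = ((j:ℝ)+1) * (N - j) * gg (α+β) j x := by
  have h1 : (2*x+α+β) ≠ 0 := fun h => hx (by rw [h]; ring)
  have h2 : (2*x+α+β+1) ≠ 0 := fun h => hx (by rw [show 2*x+α+β+1 = 2*x+α+β+1 from rfl, h]; ring)
  have h3 : (2*x+α+β+2) ≠ 0 := fun h => hx (by rw [h]; ring)
  have F1 := diff_forward (α+β) j x
  have F2 := diff_forward (α+β) j (x-1)
  rw [sub_add_cancel] at F2
  have R1 := gp_rel (α+β) j x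
  have R2 := gp_back (α+β) j x
  have e1 : gg (α+β) (j+1) (x+1) - gg (α+β) (j+1) x = ((j:ℝ)+1) * (2*x + (α+β) + 2) * gp (α+β) j x := F1
  have e2 : gg (α+β) (j+1) x - gg (α+β) (j+1) (x-1) = ((j:ℝ)+1) * (2*(x-1) + (α+β) + 2) * gp (α+β) j (x-1) := F2
  rw [e1, e2]
  set P := gp (α+β) j x
  set Q := gp (α+β) j (x-1)
  set G := gg (α+β) j x
  have h1' : x*2+α+β ≠ 0 := by contrapose! h1; linarith
  have h2' : x*2+α+β+1 ≠ 0 := by contrapose! h2; linarith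
  have h3' : x*2+α+β+2 ≠ 0 := by contrapose! h3; linarith
  field_simp
  linear_combination ((N-x)*(2*x+(α+β))*(2*x+(α+β)+2))*R1 +
    ((x+(α+β)+N+1)*(2*x+(α+β))*(2*x+(α+β)+2))*R2

lemma telescope (a : ℝ) (ha : ∀ i : ℕ, a + (i:ℝ) ≠ 0) (M : ℕ) :
    ∀ L, L < M →
    ∑ l ∈ Finset.range (L+1), (poch (a+l) (M-l) * (l.factorial:ℝ))⁻¹
      = (a * poch (a+L+1) (M-1-L) * (L.factorial:ℝ))⁻¹ := by
  intro L
  induction L with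
  | zero =>
      intro h0
      simp only [zero_add, Finset.range_one, Finset.sum_singleton, Nat.cast_zero, add_zero,
        Nat.factorial_zero, Nat.cast_one, mul_one, Nat.sub_zero]
      have hM : poch a M = a * poch (a+1) (M-1) := by
        conv_lhs => rw [show M = (M-1)+1 by omega]
        rw [poch_succ']
      rw [hM]
  | succ L ih =>
      intro hL
      have hL' : L < M := by omega
      rw [Finset.sum_range_succ, ih hL']
      have e1 : M - 1 - L = (M - L - 2) + 1 := by omega
      have e2 : M - (L+1) = (M - L - 2) + 1 := by omega
      have e3 : M - 1 - (L+1) = M - L - 2 := by omega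
      have e4 : (a + ((L+1:ℕ):ℝ)) = a + L + 1 := by push_cast; ring
      have e5 : (a + ((L+1:ℕ):ℝ) + 1) = a + L + 1 + 1 := by push_cast; ring
      rw [e1, e3, poch_succ', e2, e4, poch_succ']
      set p := poch (a+↑L+1+1) (M-L-2) with hp
      have hpne : p ≠ 0 := by
        apply poch_ne_zero
        intro i
        have h := ha (L+2+i)
        push_cast at h
        intro hcon; apply h; linarith
      have ha0 : a ≠ 0 := by simpa using ha 0
      have haL : a + ↑L + 1 ≠ 0 := by
        have h := ha (L+1); push_cast at h
        intro hcon; apply h; linarith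
      have hfL : ((L.factorial : ℝ)) ≠ 0 := by exact_mod_cast L.factorial_ne_zero
      have hL1 : ((L:ℝ)+1) ≠ 0 := by positivity
      rw [Nat.factorial_succ]
      push_cast
      field_simp
      ring

def cc (α N : ℝ) (n j : ℕ) : ℝ :=
  (-1)^j * poch (-(n:ℝ)) j * poch (-N + j) (n-j) / (poch (α+1) j * (j.factorial:ℝ))

lemma telescopeIcc (a : ℝ) (ha : ∀ i : ℕ, a + (i:ℝ) ≠ 0) (M : ℕ) (hM : 1 ≤ M) :
    ∑ m ∈ Finset.Icc 1 M, (poch (a + ((M-m:ℕ):ℝ)) m * ((M-m).factorial:ℝ))⁻¹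
      = (a * ((M-1).factorial:ℝ))⁻¹ := by
  have T := telescope a ha M (M-1) (by omega)
  rw [show M-1+1 = M by omega] at T
  rw [← Finset.sum_range_reflect] at T
  rw [show M-1-(M-1) = 0 by omega] at T
  rw [show poch (a+((M-1:ℕ):ℝ)+1) 0 = 1 from by simp [poch], mul_one] at T
  rw [show Finset.Icc 1 M = Finset.Ico 1 (M+1) from by rw [Finset.Ico_add_one_right_eq_Icc]]
  rw [Finset.sum_Ico_eq_sum_range]
  rw [show M+1-1 = M by omega]
  rw [← T]
  apply Finset.sum_congr rfl
  intro i hi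
  rw [Finset.mem_range] at hi
  rw [show M - (M-1-i) = 1+i by omega, show M-1-i = M-(1+i) by omega]

lemma star (α N : ℝ) (hα : ∀ k : ℕ, α ≠ -1 - k) (n k : ℕ) (hk : k < n) :
    (n.factorial:ℝ)⁻¹ * cc α N n (k+1) * (((k:ℝ)+1) * (N - k)) =
    ∑ m ∈ Finset.Icc 1 n, (-1:ℝ)^(m+1) * (poch (N - n + 1) m / poch (α + n - m + 1) m) *
      (((n-m).factorial:ℝ)⁻¹ * cc α N (n-m) k) := by
  have hpα : ∀ j : ℕ, poch (α+1) j ≠ 0 := by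
    intro j; apply poch_ne_zero; intro i
    have := hα i; intro hcon; apply this; linarith
  -- restrict the sum
  rw [← Finset.sum_subset (Finset.Icc_subset_Icc le_rfl (by omega : n - k ≤ n))]
  swap
  · intro m hm hm'
    rw [Finset.mem_Icc] at hm hm'
    have h0 : n - m < k := by omega
    have h1 : poch (-((n-m : ℕ):ℝ)) k = 0 := poch_cast_zero _ _ h0
    simp [cc, h1]
  -- rewrite each term
  have key : ∀ m ∈ Finset.Icc 1 (n-k),
      (-1:ℝ)^(m+1) * (poch (N - n + 1) m / poch (α + n - m + 1) m) *
        (((n-m).factorial:ℝ)⁻¹ * cc α N (n-m) k)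
      = ((-1:ℝ)^(n-k-1) * poch (N - (n:ℝ) + 1) (n-k) / (poch (α+1) k * (k.factorial:ℝ))) *
        (poch ((α+(k:ℝ)+1) + (((n-k)-m:ℕ):ℝ)) m * (((n-k)-m).factorial:ℝ))⁻¹ := by
    intro m hm
    rw [Finset.mem_Icc] at hm
    obtain ⟨hm1, hm2⟩ := hm
    have hkm : k ≤ n - m := by omega
    have B1 : (-1:ℝ)^k * poch (-(((n-m):ℕ):ℝ)) k
        = ((n-m).factorial : ℝ) / ((n-m-k).factorial : ℝ) := by
      have h := poch_factorial (n-m) k hkm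
      have hf : (((n-m-k).factorial : ℕ) : ℝ) ≠ 0 := by exact_mod_cast (n-m-k).factorial_ne_zero
      have hs : ((-1:ℝ))^(k*2) = 1 := by rw [mul_comm, pow_mul]; norm_num
      field_simp
      linear_combination ((-1:ℝ)^k) * h + (((n-m).factorial:ℕ):ℝ) * hs
    have B2 : poch (-N + ((k:ℕ):ℝ)) (n-m-k)
        = (-1:ℝ)^(n-m-k) * poch (N - (n:ℝ) + m + 1) (n-m-k) := by
      have h := poch_reflect (N - (n:ℝ) + m + 1) (n-m-k)
      rw [show (-(N - (n:ℝ) + m + 1) - ((n-m-k:ℕ):ℝ) + 1) = -N + ((k:ℕ):ℝ) from by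
        push_cast [Nat.cast_sub (by omega : m + k ≤ n), Nat.cast_sub] <;> try ring
        rw [Nat.cast_sub hkm, Nat.cast_sub (by omega : m ≤ n)]; push_cast; ring] at h
      exact h
    have B3 : poch (N - (n:ℝ) + 1) (n-k)
        = poch (N - (n:ℝ) + 1) m * poch (N - (n:ℝ) + m + 1) (n-m-k) := by
      have h := poch_add (N - (n:ℝ) + 1) m (n-m-k)
      rw [show m + (n-m-k) = n-k by omega] at h
      rw [h, show (N - (n:ℝ) + 1 + (m:ℝ)) = N - (n:ℝ) + m + 1 from by ring]
    have B4 : poch ((α+(k:ℝ)+1) + (((n-k)-m:ℕ):ℝ)) m = poch (α + (n:ℝ) - m + 1) m := by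
      rw [show ((α+(k:ℝ)+1) + (((n-k)-m:ℕ):ℝ)) = α + (n:ℝ) - m + 1 from by
        rw [Nat.cast_sub (by omega : m ≤ n - k), Nat.cast_sub (by omega : k ≤ n)]; ring]
    have B5 : ((n-k)-m).factorial = (n-m-k).factorial := by rw [show (n-k)-m = n-m-k by omega]
    have hsign : ((-1:ℝ))^(n-k-1) = (-1:ℝ)^(m+1) * (-1:ℝ)^(n-m-k) := by
      rw [← pow_add, show (m+1)+(n-m-k) = (n-k-1) + 2 by omega, pow_add]
      norm_num
    have hP2 : poch (α + (n:ℝ) - m + 1) m ≠ 0 := by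
      apply poch_ne_zero; intro i
      have := hα (n - m + i)
      intro hcon; apply this
      push_cast [Nat.cast_sub (by omega : m ≤ n)]
      push_cast [Nat.cast_sub (by omega : m ≤ n)] at hcon
      linarith
    have hpk := hpα k
    have hfk : ((k.factorial : ℕ):ℝ) ≠ 0 := by exact_mod_cast k.factorial_ne_zero
    have hfnm : (((n-m).factorial : ℕ):ℝ) ≠ 0 := by exact_mod_cast (n-m).factorial_ne_zero
    have hfnmk : (((n-m-k).factorial : ℕ):ℝ) ≠ 0 := by exact_mod_cast (n-m-k).factorial_ne_zero
    rw [cc, B2, B4, B5, B3, hsign]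
    rw [show ((-1:ℝ)^k * poch (-(((n-m):ℕ):ℝ)) k) = ((n-m).factorial : ℝ) / ((n-m-k).factorial : ℝ) from B1]
    field_simp
  rw [Finset.sum_congr rfl key]
  rw [← Finset.mul_sum]
  have ha : ∀ i : ℕ, (α+(k:ℝ)+1) + (i:ℝ) ≠ 0 := by
    intro i
    have := hα (k+i); intro hcon; apply this; push_cast; linarith
  rw [telescopeIcc _ ha (n-k) (by omega)]
  have hk1 : k + 1 ≤ n := hk
  have A1 : (-1:ℝ)^(k+1) * poch (-((n:ℕ):ℝ)) (k+1)
      = (n.factorial : ℝ) / ((n-(k+1)).factorial : ℝ) := by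
    have h := poch_factorial n (k+1) hk1
    have hf : (((n-(k+1)).factorial : ℕ) : ℝ) ≠ 0 := by exact_mod_cast (n-(k+1)).factorial_ne_zero
    have hs : ((-1:ℝ))^(k*2) = 1 := by rw [mul_comm, pow_mul]; norm_num
    field_simp
    linear_combination ((-1:ℝ)^(k+1)) * h + ((n.factorial:ℕ):ℝ) * hs
  have A2 : poch (-N + (((k+1):ℕ):ℝ)) (n-(k+1))
      = (-1:ℝ)^(n-k-1) * poch (N - (n:ℝ) + 1) (n-k-1) := by
    have h := poch_reflect (N - (n:ℝ) + 1) (n-k-1)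
    rw [show (-(N - (n:ℝ) + 1) - ((n-k-1:ℕ):ℝ) + 1) = -N + (((k+1):ℕ):ℝ) from by
      rw [Nat.cast_sub (by omega : 1 ≤ n - k), Nat.cast_sub (by omega : k ≤ n)]; push_cast; ring] at h
    rw [show n-(k+1) = n-k-1 by omega]
    exact h
  have A3 : poch (N - (n:ℝ) + 1) (n-k) = poch (N - (n:ℝ) + 1) (n-k-1) * (N - (k:ℝ)) := by
    have h := poch_succ (N - (n:ℝ) + 1) (n-k-1)
    rw [show (n-k-1)+1 = n-k by omega] at h
    rw [h, show (N - (n:ℝ) + 1 + ((n-k-1:ℕ):ℝ)) = N - (k:ℝ) from by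
      rw [Nat.cast_sub (by omega : 1 ≤ n - k), Nat.cast_sub (by omega : k ≤ n)]; push_cast; ring]
  have A4 : poch (α+1) (k+1) = poch (α+1) k * (α+1+(k:ℝ)) := poch_succ _ _
  have hαk : (α+1+(k:ℝ)) ≠ 0 := by
    have := hα k; intro hcon; apply this; linarith
  have hpk := hpα k
  have hfk : ((k.factorial : ℕ):ℝ) ≠ 0 := by exact_mod_cast k.factorial_ne_zero
  have hfn : ((n.factorial : ℕ):ℝ) ≠ 0 := by exact_mod_cast n.factorial_ne_zero
  have hfnk : (((n-(k+1)).factorial : ℕ):ℝ) ≠ 0 := by exact_mod_cast (n-(k+1)).factorial_ne_zero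
  have e6 : ((n-k)-1).factorial = (n-(k+1)).factorial := by rw [show (n-k)-1 = n-(k+1) by omega]
  rw [cc, A2, A4, A3, e6]
  rw [show ((-1:ℝ)^(k+1) * poch (-((n:ℕ):ℝ)) (k+1)) = (n.factorial : ℝ) / ((n-(k+1)).factorial : ℝ) from A1]
  have hα2 : (α+(k:ℝ)+1) ≠ 0 := by intro hcon; apply hαk; linarith
  rw [show (((k+1).factorial : ℕ):ℝ) = ((k:ℝ)+1) * (k.factorial:ℝ) from by
    rw [Nat.factorial_succ]; push_cast; ring]
  field_simp
  ring


lemma eval_dualHahn (α β N x : ℝ) (n : ℕ) :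
    (dualHahn α β N n).eval (lam α β x)
      = (n.factorial:ℝ)⁻¹ * ∑ j ∈ Finset.range (n+1), cc α N n j * gg (α+β) j x := by
  rw [dualHahn, eval_mul, eval_C, Polynomial.eval_finset_sum]
  congr 1
  apply Finset.sum_congr rfl
  intro j _
  rw [eval_mul, eval_C, Polynomial.eval_prod, cc, gg]
  congr 1
  apply Finset.prod_congr rfl
  intro i _
  rw [eval_sub, eval_X, eval_C, lam]
  ring

/-- The sequence `ε_n = (N−n+1)/(α+n)` defines a `𝒟`-operator for the dual Hahn
polynomials: the displayed first-order difference operator acts as the corresponding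
lowering operator. -/
theorem dualHahn_Doperator_three (α β N : ℝ) (hα : ∀ k : ℕ, α ≠ -1 - k)
    (n : ℕ) (x : ℝ)
    (hx : (2 * x + α + β) * (2 * x + α + β + 1) * (2 * x + α + β + 2) ≠ 0) :
    ((x + α + β + 1) * (N - x) / ((2 * x + α + β + 1) * (2 * x + α + β + 2))) *
        ((dualHahn α β N n).eval (lam α β (x + 1)) - (dualHahn α β N n).eval (lam α β x)) +
      (x * (x + α + β + N + 1) / ((2 * x + α + β) * (2 * x + α + β + 1))) *
        ((dualHahn α β N n).eval (lam α β x) - (dualHahn α β N n).eval (lam α β (x - 1))) =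
    ∑ j ∈ Finset.Icc 1 n, (-1 : ℝ) ^ (j + 1) *
      (poch (N - n + 1) j / poch (α + n - j + 1) j) *
        (dualHahn α β N (n - j)).eval (lam α β x) := by
  set A := (x + α + β + 1) * (N - x) / ((2 * x + α + β + 1) * (2 * x + α + β + 2)) with hA
  set B := x * (x + α + β + N + 1) / ((2 * x + α + β) * (2 * x + α + β + 1)) with hB
  have hLHS : A * ((dualHahn α β N n).eval (lam α β (x + 1)) - (dualHahn α β N n).eval (lam α β x)) +
      B * ((dualHahn α β N n).eval (lam α β x) - (dualHahn α β N n).eval (lam α β (x - 1)))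
      = ∑ j ∈ Finset.range n,
          (n.factorial:ℝ)⁻¹ * cc α N n (j+1) * (((j:ℝ)+1) * (N - j)) * gg (α+β) j x := by
    rw [eval_dualHahn α β N (x+1) n, eval_dualHahn α β N x n, eval_dualHahn α β N (x-1) n]
    have step1 : A * ((n.factorial:ℝ)⁻¹ * ∑ j ∈ Finset.range (n+1), cc α N n j * gg (α+β) j (x+1)
          - (n.factorial:ℝ)⁻¹ * ∑ j ∈ Finset.range (n+1), cc α N n j * gg (α+β) j x) +
        B * ((n.factorial:ℝ)⁻¹ * ∑ j ∈ Finset.range (n+1), cc α N n j * gg (α+β) j x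
          - (n.factorial:ℝ)⁻¹ * ∑ j ∈ Finset.range (n+1), cc α N n j * gg (α+β) j (x-1))
        = ∑ j ∈ Finset.range (n+1), ((n.factorial:ℝ)⁻¹ * cc α N n j) *
            (A * (gg (α+β) j (x+1) - gg (α+β) j x) + B * (gg (α+β) j x - gg (α+β) j (x-1))) := by
      simp only [Finset.mul_sum, ← Finset.sum_sub_distrib, ← Finset.sum_add_distrib]
      exact Finset.sum_congr rfl fun j _ => by ring
    rw [step1, Finset.sum_range_succ']
    have h0 : ((n.factorial:ℝ)⁻¹ * cc α N n 0) *
        (A * (gg (α+β) 0 (x+1) - gg (α+β) 0 x) + B * (gg (α+β) 0 x - gg (α+β) 0 (x-1))) = 0 := by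
      simp [gg]
    rw [h0, add_zero]
    apply Finset.sum_congr rfl
    intro j _
    rw [hA, hB, op_g α β N j x hx]
    ring
  have hRHS : (∑ j ∈ Finset.Icc 1 n, (-1 : ℝ) ^ (j + 1) *
      (poch (N - n + 1) j / poch (α + n - j + 1) j) *
        (dualHahn α β N (n - j)).eval (lam α β x))
      = ∑ j ∈ Finset.range n,
          (∑ m ∈ Finset.Icc 1 n, (-1:ℝ)^(m+1) * (poch (N - n + 1) m / poch (α + n - m + 1) m) *
            (((n-m).factorial:ℝ)⁻¹ * cc α N (n-m) j)) * gg (α+β) j x := by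
    have step2 : ∀ m ∈ Finset.Icc 1 n,
        (-1 : ℝ) ^ (m + 1) * (poch (N - n + 1) m / poch (α + n - m + 1) m) *
          (dualHahn α β N (n - m)).eval (lam α β x)
        = ∑ j ∈ Finset.range n, (-1:ℝ)^(m+1) * (poch (N - n + 1) m / poch (α + n - m + 1) m) *
            (((n-m).factorial:ℝ)⁻¹ * cc α N (n-m) j) * gg (α+β) j x := by
      intro m hm
      rw [Finset.mem_Icc] at hm
      rw [eval_dualHahn α β N x (n-m)]
      have hext : ∑ j ∈ Finset.range ((n-m)+1), cc α N (n-m) j * gg (α+β) j x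
          = ∑ j ∈ Finset.range n, cc α N (n-m) j * gg (α+β) j x := by
        apply Finset.sum_subset
        · apply Finset.range_subset_range.mpr; omega
        · intro j hj hj'
          rw [Finset.mem_range] at hj hj'
          have h1 : poch (-((n-m:ℕ):ℝ)) j = 0 := poch_cast_zero _ _ (by omega)
          simp [cc, h1]
      rw [hext, Finset.mul_sum, Finset.mul_sum]
      exact Finset.sum_congr rfl fun j _ => by ring
    rw [Finset.sum_congr rfl step2, Finset.sum_comm]
    exact Finset.sum_congr rfl fun j _ => by rw [Finset.sum_mul]
  rw [hLHS, hRHS]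
  apply Finset.sum_congr rfl
  intro j hj
  rw [Finset.mem_range] at hj
  rw [← star α N hα n j hj]

end
end

section
/- Let α, β, N be real numbers with α ∉ {−1,−2,−3,…}. Then for every integer n ≥ 0 the identity Σ_{j=0}^{n} R_j^{α,β,N}(λ) = R_n^{α,β,N−1}(λ) holds in ℝ[λ]. -/
open Polynomial Finset

noncomputable section

lemma poch_zero (a : ℝ) : poch a 0 = 1 := by simp [poch]

lemma poch_top (n : ℕ) : poch (-(n:ℝ)) (n+1) = 0 :=
  Finset.prod_eq_zero (Finset.self_mem_range_succ n) (by push_cast; ring)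

lemma poch_neg_mul (n j : ℕ) (h : j ≤ n) :
    poch (-(n:ℝ)) j * ((n-j).factorial : ℝ) = (-1)^j * (n.factorial : ℝ) := by
  induction j with
  | zero => simp [poch_zero]
  | succ j ih =>
    have hj : j ≤ n := by omega
    have hfact : (((n-j).factorial : ℕ) : ℝ) = ((n:ℝ) - j) * ((n-(j+1)).factorial : ℝ) := by
      have h1 : n - j = (n - (j+1)) + 1 := by omega
      rw [h1, Nat.factorial_succ]
      push_cast
      have h2 : ((n - (j+1) : ℕ) : ℝ) = (n:ℝ) - (j+1) := by
        push_cast [Nat.cast_sub h]; ring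
      rw [h2]; ring
    rw [poch_succ]
    have ih' := ih hj
    rw [hfact] at ih'
    rw [pow_succ]
    push_cast
    nlinarith [ih']

lemma poch_neg_div (n j : ℕ) (h : j ≤ n) :
    poch (-(n:ℝ)) j = (-1)^j * (n.factorial : ℝ) / ((n-j).factorial : ℝ) := by
  have hf : (((n-j).factorial : ℕ) : ℝ) ≠ 0 := Nat.cast_ne_zero.mpr (Nat.factorial_ne_zero _)
  rw [eq_div_iff hf]
  exact poch_neg_mul n j h

lemma poch_reduce (n j : ℕ) (h : j ≤ n) (X d : ℝ) (hd : d ≠ 0) :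
    ((n.factorial : ℝ))⁻¹ * ((-1)^j * poch (-(n:ℝ)) j * X / d)
      = X / (((n-j).factorial : ℝ) * d) := by
  have hf1 : ((n.factorial : ℕ) : ℝ) ≠ 0 := Nat.cast_ne_zero.mpr (Nat.factorial_ne_zero _)
  have hf2 : (((n-j).factorial : ℕ) : ℝ) ≠ 0 := Nat.cast_ne_zero.mpr (Nat.factorial_ne_zero _)
  have hsq : (-1:ℝ)^j * (-1)^j = 1 := by
    rw [← pow_add]
    exact Even.neg_one_pow ⟨j, rfl⟩
  rw [poch_neg_div n j h]
  field_simp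
  linear_combination X * hsq

lemma poch_key (a : ℝ) (m : ℕ) :
    poch (a+1) (m+1) = ((m:ℝ)+1) * poch (a+1) m + poch a (m+1) := by
  rw [poch_succ, poch_succ']; ring

lemma coef_step (α N : ℝ) (hd : ∀ j : ℕ, poch (α+1) j ≠ 0) (n j : ℕ) (hj : j ≤ n + 1) :
    (((n+1).factorial : ℝ))⁻¹ * ((-1:ℝ)^j * poch (-(((n+1):ℕ):ℝ)) j * poch (-(N-1)+j) (n+1-j)
        / (poch (α+1) j * (j.factorial:ℝ)))
  = ((n.factorial : ℝ))⁻¹ * ((-1:ℝ)^j * poch (-(n:ℝ)) j * poch (-(N-1)+j) (n-j)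
        / (poch (α+1) j * (j.factorial:ℝ)))
  + (((n+1).factorial : ℝ))⁻¹ * ((-1:ℝ)^j * poch (-(((n+1):ℕ):ℝ)) j * poch (-N+j) (n+1-j)
        / (poch (α+1) j * (j.factorial:ℝ))) := by
  have hfj : ((j.factorial : ℕ) : ℝ) ≠ 0 := Nat.cast_ne_zero.mpr (Nat.factorial_ne_zero _)
  have hD : poch (α+1) j * (j.factorial:ℝ) ≠ 0 := mul_ne_zero (hd j) hfj
  rcases eq_or_lt_of_le hj with he | hl
  · subst he
    simp [poch_top, Nat.sub_self, poch_zero]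
  · have hjn : j ≤ n := by omega
    have h1 : n + 1 - j = (n - j) + 1 := by omega
    rw [poch_reduce (n+1) j (by omega) _ _ hD, poch_reduce n j hjn _ _ hD,
        poch_reduce (n+1) j (by omega) _ _ hD, h1]
    set m := n - j with hm
    have ha : -(N-1) + (j:ℝ) = (-N + j) + 1 := by ring
    rw [ha, poch_key (-N + (j:ℝ)) m, Nat.factorial_succ]
    have hfm : ((m.factorial : ℕ) : ℝ) ≠ 0 := Nat.cast_ne_zero.mpr (Nat.factorial_ne_zero _)
    have hm1 : ((m:ℝ) + 1) ≠ 0 := by positivity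
    push_cast
    field_simp

lemma dualHahn_eq (α β N : ℝ) (n : ℕ) :
    dualHahn α β N n = ∑ j ∈ Finset.range (n+1),
      Polynomial.C (((n.factorial : ℝ))⁻¹ *
          ((-1 : ℝ) ^ j * poch (-(n : ℝ)) j * poch (-N + j) (n - j)
            / (poch (α + 1) j * (j.factorial : ℝ)))) *
        ∏ i ∈ Finset.range j, (Polynomial.X - Polynomial.C ((i : ℝ) * (α + β + 1 + i))) := by
  rw [dualHahn, Finset.mul_sum]
  exact Finset.sum_congr rfl fun j _ => by rw [← mul_assoc, ← C_mul]

lemma dualHahn_step (α β N : ℝ) (hd : ∀ j : ℕ, poch (α+1) j ≠ 0) (n : ℕ) :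
    dualHahn α β (N-1) (n+1) = dualHahn α β (N-1) n + dualHahn α β N (n+1) := by
  rw [dualHahn_eq α β (N-1) (n+1), dualHahn_eq α β (N-1) n, dualHahn_eq α β N (n+1)]
  have hmid : (∑ j ∈ Finset.range (n+1),
      Polynomial.C (((n.factorial : ℝ))⁻¹ *
          ((-1 : ℝ) ^ j * poch (-(n : ℝ)) j * poch (-(N-1) + j) (n - j)
            / (poch (α + 1) j * (j.factorial : ℝ)))) *
        ∏ i ∈ Finset.range j, (Polynomial.X - Polynomial.C ((i : ℝ) * (α + β + 1 + i))))
      = ∑ j ∈ Finset.range (n+1+1),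
      Polynomial.C (((n.factorial : ℝ))⁻¹ *
          ((-1 : ℝ) ^ j * poch (-(n : ℝ)) j * poch (-(N-1) + j) (n - j)
            / (poch (α + 1) j * (j.factorial : ℝ)))) *
        ∏ i ∈ Finset.range j, (Polynomial.X - Polynomial.C ((i : ℝ) * (α + β + 1 + i))) := by
    symm
    rw [Finset.sum_range_succ, poch_top]
    simp
  rw [hmid, ← Finset.sum_add_distrib]
  refine Finset.sum_congr rfl fun j hj => ?_
  rw [← add_mul, ← C_add]
  have hj' : j ≤ n + 1 := by simpa [Nat.lt_succ_iff] using hj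
  exact congrArg (· * _) (congrArg Polynomial.C (coef_step α N hd n j hj'))

lemma poch_succ_ne (α : ℝ) (hα : ∀ k : ℕ, α ≠ -1 - k) (j : ℕ) : poch (α+1) j ≠ 0 := by
  rw [poch]
  refine Finset.prod_ne_zero_iff.mpr fun i _ => ?_
  intro h
  exact hα i (by linarith)

/-- Summation identity for dual Hahn polynomials: `Σ_{j=0}^n R_j^{α,β,N} = R_n^{α,β,N−1}`. -/
theorem dualHahn_sum_identity (α β N : ℝ) (hα : ∀ k : ℕ, α ≠ -1 - k) (n : ℕ) :
    ∑ j ∈ Finset.range (n + 1), dualHahn α β N j = dualHahn α β (N - 1) n := by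
  induction n with
  | zero => simp [dualHahn, poch_zero]
  | succ n ih =>
    rw [Finset.sum_range_succ, ih, ← dualHahn_step α β N (poch_succ_ne α hα) n]

end
end
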